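/- arXiv:2306.13791 — 5 statements merged into one kernel-verified Lean document; each statement's English description precedes it below -/
import Mathlib

section
/- For elements A, B in a Banach algebra, exp(A+B) = lim_{n→∞} [ (1/2)(exp(A/n) exp(B/n) + exp(B/n) exp(A/n)) ]^n. -/
set_option linter.unusedSectionVars false
set_option maxHeartbeats 1000000

open NormedSpace Filter Finset Nat

section JLTAux
variable {𝔅 : Type*} [NormedRing 𝔅] [NormedAlgebra ℝ 𝔅] [CompleteSpace 𝔅]

lemma jlt_real_exp_hasSum (t : ℝ) : HasSum (fun n : ℕ => t ^ n / n !) (Real.exp t) := by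
  rw [Real.exp_eq_exp_ℝ]
  exact NormedSpace.expSeries_div_hasSum_exp t

lemma jlt_norm_exp_sub_one_sub_le (x : 𝔅) :
    ‖exp x - 1 - x‖ ≤ ‖x‖ ^ 2 * Real.exp ‖x‖ := by
  have h := (hasSum_nat_add_iff' (f := fun n : ℕ => ((n ! : ℝ)⁻¹) • x ^ n) 2).mpr
    (NormedSpace.exp_series_hasSum_exp' x)
  have hsum2 : (∑ i ∈ Finset.range 2, ((i ! : ℝ)⁻¹) • x ^ i) = 1 + x := by
    simp [Finset.sum_range_succ]
  rw [hsum2] at h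
  have hb : HasSum (fun n : ℕ => ‖x‖ ^ 2 * (‖x‖ ^ n / n !)) (‖x‖ ^ 2 * Real.exp ‖x‖) :=
    (jlt_real_exp_hasSum ‖x‖).mul_left _
  have hle : ∀ n : ℕ, ‖(((n + 2)! : ℝ)⁻¹) • x ^ (n + 2)‖ ≤ ‖x‖ ^ 2 * (‖x‖ ^ n / n !) := by
    intro n
    rw [norm_smul, Real.norm_eq_abs, abs_of_nonneg (by positivity)]
    calc ((n + 2)! : ℝ)⁻¹ * ‖x ^ (n + 2)‖ ≤ ((n + 2)! : ℝ)⁻¹ * ‖x‖ ^ (n + 2) := by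
          gcongr; exact norm_pow_le' x (by omega)
      _ ≤ ((n)! : ℝ)⁻¹ * ‖x‖ ^ (n + 2) := by
          gcongr
          omega
      _ = ‖x‖ ^ 2 * (‖x‖ ^ n / n !) := by rw [pow_add]; ring
  have := h.norm_le_of_bounded hb hle
  calc ‖exp x - 1 - x‖ = ‖exp x - (1 + x)‖ := by rw [sub_sub]
    _ ≤ ‖x‖ ^ 2 * Real.exp ‖x‖ := this

lemma jlt_norm_exp_sub_one_le (x : 𝔅) :
    ‖exp x - 1‖ ≤ ‖x‖ * Real.exp ‖x‖ := by
  have h := (hasSum_nat_add_iff' (f := fun n : ℕ => ((n ! : ℝ)⁻¹) • x ^ n) 1).mpr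
    (NormedSpace.exp_series_hasSum_exp' x)
  have hsum1 : (∑ i ∈ Finset.range 1, ((i ! : ℝ)⁻¹) • x ^ i) = 1 := by simp
  rw [hsum1] at h
  have hb : HasSum (fun n : ℕ => ‖x‖ * (‖x‖ ^ n / n !)) (‖x‖ * Real.exp ‖x‖) :=
    (jlt_real_exp_hasSum ‖x‖).mul_left _
  refine h.norm_le_of_bounded hb fun n => ?_
  rw [norm_smul, Real.norm_eq_abs, abs_of_nonneg (by positivity)]
  calc ((n + 1)! : ℝ)⁻¹ * ‖x ^ (n + 1)‖ ≤ ((n + 1)! : ℝ)⁻¹ * ‖x‖ ^ (n + 1) := by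
        gcongr; exact norm_pow_le' x (by omega)
    _ ≤ ((n)! : ℝ)⁻¹ * ‖x‖ ^ (n + 1) := by
        gcongr
        omega
    _ = ‖x‖ * (‖x‖ ^ n / n !) := by rw [pow_add]; ring

lemma jlt_norm_pow_le (h1 : ‖(1 : 𝔅)‖ ≤ 1) (x : 𝔅) (n : ℕ) : ‖x ^ n‖ ≤ ‖x‖ ^ n := by
  cases n with
  | zero => simpa using h1
  | succ m => exact norm_pow_le' x (Nat.succ_pos m)

lemma jlt_norm_exp_le (h1 : ‖(1 : 𝔅)‖ ≤ 1) (x : 𝔅) : ‖exp x‖ ≤ Real.exp ‖x‖ := by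
  have h := NormedSpace.exp_series_hasSum_exp' (𝕂 := ℝ) x
  refine h.norm_le_of_bounded (jlt_real_exp_hasSum ‖x‖) fun n => ?_
  rw [norm_smul, Real.norm_eq_abs, abs_of_nonneg (by positivity), div_eq_inv_mul]
  gcongr
  exact jlt_norm_pow_le h1 x n


lemma jlt_pow_sub_pow (T S : 𝔅) {M : ℝ} (hT : ‖T‖ ≤ M) (hS : ‖S‖ ≤ M) (n : ℕ) :
    ‖T ^ (n + 1) - S ^ (n + 1)‖ ≤ (n + 1) * M ^ n * ‖T - S‖ := by
  have hM : 0 ≤ M := le_trans (norm_nonneg T) hT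
  induction n with
  | zero => simp
  | succ m ih =>
    have hid : T ^ (m + 2) - S ^ (m + 2) =
        (T - S) * T ^ (m + 1) + S * (T ^ (m + 1) - S ^ (m + 1)) := by
      rw [sub_mul, mul_sub, pow_succ' T (m+1), pow_succ' S (m+1)]; abel
    have hTp : ‖T ^ (m + 1)‖ ≤ M ^ (m + 1) :=
      (norm_pow_le' T (Nat.succ_pos m)).trans (pow_le_pow_left₀ (norm_nonneg T) hT _)
    calc ‖T ^ (m + 2) - S ^ (m + 2)‖
        ≤ ‖(T - S) * T ^ (m + 1)‖ + ‖S * (T ^ (m + 1) - S ^ (m + 1))‖ := by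
          rw [hid]; exact norm_add_le _ _
      _ ≤ ‖T - S‖ * M ^ (m + 1) + M * ((m + 1) * M ^ m * ‖T - S‖) := by
          refine add_le_add ((norm_mul_le _ _).trans ?_) ((norm_mul_le _ _).trans ?_)
          · exact mul_le_mul_of_nonneg_left hTp (norm_nonneg _)
          · exact mul_le_mul hS ih (norm_nonneg _) hM
      _ = (↑(m + 1) + 1) * M ^ (m + 1) * ‖T - S‖ := by push_cast; ring

lemma jlt_key (h1 : ‖(1 : 𝔅)‖ ≤ 1) (X Y : 𝔅) :
    ‖exp X * exp Y - exp (X + Y)‖ ≤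
      2 * (‖X‖ + ‖Y‖) ^ 2 * Real.exp (‖X‖ + ‖Y‖) := by
  have hid : exp X * exp Y - exp (X + Y) =
      (exp X - 1 - X) * exp Y + X * (exp Y - 1) + (exp Y - 1 - Y)
        - (exp (X + Y) - 1 - (X + Y)) := by noncomm_ring
  have hu : (0:ℝ) ≤ ‖X‖ := norm_nonneg X
  have hv : (0:ℝ) ≤ ‖Y‖ := norm_nonneg Y
  have hvs : ‖Y‖ ≤ ‖X‖ + ‖Y‖ := le_add_of_nonneg_left hu
  have hBC : Real.exp ‖Y‖ ≤ Real.exp (‖X‖ + ‖Y‖) := Real.exp_le_exp.mpr hvs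
  have hAB : Real.exp ‖X‖ * Real.exp ‖Y‖ = Real.exp (‖X‖ + ‖Y‖) := (Real.exp_add _ _).symm
  have t4 : ‖exp (X + Y) - 1 - (X + Y)‖ ≤ (‖X‖ + ‖Y‖) ^ 2 * Real.exp (‖X‖ + ‖Y‖) :=
    (jlt_norm_exp_sub_one_sub_le (X + Y)).trans (by gcongr <;>
      first
        | exact norm_nonneg _
        | exact norm_add_le X Y)
  calc ‖exp X * exp Y - exp (X + Y)‖
      ≤ ‖(exp X - 1 - X) * exp Y‖ + ‖X * (exp Y - 1)‖ + ‖exp Y - 1 - Y‖ +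
        ‖exp (X + Y) - 1 - (X + Y)‖ := by
        rw [hid]; exact (norm_sub_le _ _).trans (add_le_add_left (norm_add₃_le) _)
    _ ≤ (‖X‖ ^ 2 * Real.exp ‖X‖) * Real.exp ‖Y‖ + ‖X‖ * (‖Y‖ * Real.exp ‖Y‖) +
        ‖Y‖ ^ 2 * Real.exp ‖Y‖ + (‖X‖ + ‖Y‖) ^ 2 * Real.exp (‖X‖ + ‖Y‖) := by
        refine add_le_add (add_le_add (add_le_add ?_ ?_) (jlt_norm_exp_sub_one_sub_le Y)) t4
        · exact (norm_mul_le _ _).trans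
            (mul_le_mul (jlt_norm_exp_sub_one_sub_le X) (jlt_norm_exp_le h1 Y)
              (norm_nonneg _) (by positivity))
        · exact (norm_mul_le _ _).trans
            (mul_le_mul_of_nonneg_left (jlt_norm_exp_sub_one_le Y) hu)
    _ ≤ 2 * (‖X‖ + ‖Y‖) ^ 2 * Real.exp (‖X‖ + ‖Y‖) := by
        nlinarith [Real.exp_pos (‖X‖ + ‖Y‖), Real.exp_pos ‖Y‖, mul_nonneg hu hv,
          mul_nonneg (mul_nonneg hu hv) (Real.exp_pos (‖X‖ + ‖Y‖)).le, sq_nonneg ‖X‖,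
          sq_nonneg ‖Y‖]

theorem jlt_main (h1 : ‖(1 : 𝔅)‖ ≤ 1) (A B : 𝔅) :
    Tendsto
      (fun n : ℕ =>
        ((1/2 : ℝ) • (exp ((n : ℝ)⁻¹ • A) * exp ((n : ℝ)⁻¹ • B) +
            exp ((n : ℝ)⁻¹ • B) * exp ((n : ℝ)⁻¹ • A))) ^ n)
      atTop (nhds (exp (A + B))) := by
  set s : ℝ := ‖A‖ + ‖B‖ with hs_def
  have hs : 0 ≤ s := by positivity
  rw [tendsto_iff_norm_sub_tendsto_zero]
  have hbound : ∀ n : ℕ, 1 ≤ n →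
      ‖((1/2 : ℝ) • (exp ((n : ℝ)⁻¹ • A) * exp ((n : ℝ)⁻¹ • B) +
          exp ((n : ℝ)⁻¹ • B) * exp ((n : ℝ)⁻¹ • A))) ^ n - exp (A + B)‖ ≤
        (4 * s ^ 2 * Real.exp (2 * s)) / n := by
    intro n hn
    have hν0 : (0:ℝ) < (n:ℝ) := by exact_mod_cast Nat.pos_of_ne_zero (by omega)
    have hν1 : (1:ℝ) ≤ (n:ℝ) := by exact_mod_cast hn
    set X := (n : ℝ)⁻¹ • A with hX_def
    set Y := (n : ℝ)⁻¹ • B with hY_def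
    have hXn : ‖X‖ = (n:ℝ)⁻¹ * ‖A‖ := by
      rw [hX_def, norm_smul, Real.norm_eq_abs, abs_of_nonneg (by positivity)]
    have hYn : ‖Y‖ = (n:ℝ)⁻¹ * ‖B‖ := by
      rw [hY_def, norm_smul, Real.norm_eq_abs, abs_of_nonneg (by positivity)]
    have hσ : ‖X‖ + ‖Y‖ = (n:ℝ)⁻¹ * s := by rw [hXn, hYn, hs_def]; ring
    have hσ0 : 0 ≤ ‖X‖ + ‖Y‖ := by positivity
    have hinv1 : (n:ℝ)⁻¹ ≤ 1 := by
      rw [inv_le_one_iff₀]; right; exact hν1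
    have hσle : ‖X‖ + ‖Y‖ ≤ s := by
      rw [hσ]; exact mul_le_of_le_one_left hs hinv1
    set S := exp (X + Y) with hS_def
    set T := (1/2 : ℝ) • (exp X * exp Y + exp Y * exp X) with hT_def
    have hSpow : S ^ n = exp (A + B) := by
      letI : NormedAlgebra ℚ 𝔅 := NormedAlgebra.restrictScalars ℚ ℝ 𝔅
      rw [hS_def, ← NormedSpace.exp_nsmul]
      congr 1
      rw [hX_def, hY_def, ← smul_add, ← Nat.cast_smul_eq_nsmul ℝ, smul_smul,
        mul_inv_cancel₀ (ne_of_gt hν0), one_smul]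
    set M : ℝ := Real.exp (‖X‖ + ‖Y‖) with hM_def
    have hM1 : 1 ≤ M := Real.one_le_exp hσ0
    have hSnorm : ‖S‖ ≤ M :=
      (jlt_norm_exp_le h1 _).trans (Real.exp_le_exp.mpr (norm_add_le X Y))
    have hTnorm : ‖T‖ ≤ M := by
      have a1 : ‖exp X * exp Y‖ ≤ M := by
        refine (norm_mul_le _ _).trans ?_
        rw [hM_def, Real.exp_add]
        exact mul_le_mul (jlt_norm_exp_le h1 X) (jlt_norm_exp_le h1 Y) (norm_nonneg _)
          (Real.exp_pos _).le
      have a2 : ‖exp Y * exp X‖ ≤ M := by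
        refine (norm_mul_le _ _).trans ?_
        rw [hM_def, add_comm ‖X‖, Real.exp_add]
        exact mul_le_mul (jlt_norm_exp_le h1 Y) (jlt_norm_exp_le h1 X) (norm_nonneg _)
          (Real.exp_pos _).le
      calc ‖T‖ = (1/2 : ℝ) * ‖exp X * exp Y + exp Y * exp X‖ := by
            rw [hT_def, norm_smul, Real.norm_eq_abs, abs_of_nonneg (by norm_num)]
        _ ≤ (1/2 : ℝ) * (M + M) := by
            have := (norm_add_le (exp X * exp Y) (exp Y * exp X)).trans
              (add_le_add a1 a2)
            linarith
        _ = M := by ring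
    have hTS : ‖T - S‖ ≤ 2 * (‖X‖ + ‖Y‖) ^ 2 * M := by
      have hYX : exp (Y + X) = exp (X + Y) := by rw [add_comm]
      have hid : T - S = (1/2 : ℝ) •
          ((exp X * exp Y - exp (X + Y)) + (exp Y * exp X - exp (Y + X))) := by
        rw [hYX, hT_def, hS_def]; module
      have k1 := jlt_key h1 X Y
      have k2 := jlt_key h1 Y X
      rw [add_comm ‖Y‖] at k2
      rw [hid, norm_smul, Real.norm_eq_abs, abs_of_nonneg (by norm_num : (0:ℝ) ≤ 1/2)]
      have := (norm_add_le (exp X * exp Y - exp (X + Y))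
        (exp Y * exp X - exp (Y + X))).trans (add_le_add k1 k2)
      rw [hM_def]
      linarith
    obtain ⟨m, rfl⟩ : ∃ m, n = m + 1 := ⟨n - 1, by omega⟩
    have htel := jlt_pow_sub_pow T S hTnorm hSnorm m
    have hMm : M ^ m ≤ Real.exp s := by
      rw [hM_def, ← Real.exp_nat_mul]
      apply Real.exp_le_exp.mpr
      calc (m : ℝ) * (‖X‖ + ‖Y‖) ≤ (m + 1 : ℝ) * (‖X‖ + ‖Y‖) := by
            apply mul_le_mul_of_nonneg_right _ hσ0; linarith
        _ = s := by
            rw [hσ]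
            push_cast
            field_simp
        _ ≤ s := le_rfl
    have hMs : M ≤ Real.exp s := Real.exp_le_exp.mpr hσle
    rw [hSpow] at htel
    refine htel.trans ?_
    have hTS' : ‖T - S‖ ≤ 2 * ((m + 1 : ℝ)⁻¹ * s) ^ 2 * Real.exp s := by
      refine hTS.trans ?_
      rw [hσ]
      push_cast
      exact mul_le_mul_of_nonneg_left hMs (by positivity)
    calc ((m:ℝ) + 1) * M ^ m * ‖T - S‖
        ≤ ((m:ℝ) + 1) * Real.exp s * (2 * ((m + 1 : ℝ)⁻¹ * s) ^ 2 * Real.exp s) := by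
          have h0 : (0:ℝ) ≤ (m:ℝ) + 1 := by positivity
          have hMm0 : 0 ≤ M ^ m := by positivity
          apply mul_le_mul
          · exact mul_le_mul_of_nonneg_left hMm h0
          · exact hTS'
          · exact norm_nonneg _
          · positivity
      _ = 2 * s ^ 2 * (Real.exp s * Real.exp s) / ((m:ℝ) + 1) := by
          have hne : ((m:ℝ) + 1) ≠ 0 := by positivity
          field_simp
      _ ≤ 4 * s ^ 2 * Real.exp (2 * s) / ((m:ℝ) + 1 : ℝ) := by
          have hee : Real.exp s * Real.exp s = Real.exp (2 * s) := by
            rw [← Real.exp_add]; ring_nf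
          rw [hee]
          gcongr
          norm_num
      _ = 4 * s ^ 2 * Real.exp (2 * s) / ((m + 1 : ℕ) : ℝ) := by push_cast; ring_nf
  refine squeeze_zero' (Eventually.of_forall fun n => norm_nonneg _) ?_
    (tendsto_const_div_atTop_nhds_zero_nat (4 * s ^ 2 * Real.exp (2 * s)))
  filter_upwards [eventually_ge_atTop 1] with n hn using hbound n hn

end JLTAux

theorem jordan_lie_trotter {𝒜 : Type*} [NormedRing 𝒜] [NormedAlgebra ℝ 𝒜]
    [CompleteSpace 𝒜] (A B : 𝒜) :
    Filter.Tendsto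
      (fun n : ℕ =>
        ((1/2 : ℝ) • (NormedSpace.exp ((n : ℝ)⁻¹ • A) * NormedSpace.exp ((n : ℝ)⁻¹ • B) +
            NormedSpace.exp ((n : ℝ)⁻¹ • B) * NormedSpace.exp ((n : ℝ)⁻¹ • A))) ^ n)
      Filter.atTop (nhds (NormedSpace.exp (A + B))) := by
  set L : 𝒜 →+* (𝒜 →L[ℝ] 𝒜) :=
    { toFun := fun a => ContinuousLinearMap.mul ℝ 𝒜 a
      map_one' := by ext x; simp
      map_mul' := fun a b => by ext x; simp [mul_assoc]
      map_zero' := by ext x; simp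
      map_add' := fun a b => by ext x; simp [add_mul] } with hL_def
  have hLcont : Continuous L := (ContinuousLinearMap.mul ℝ 𝒜).continuous
  have hLsmul : ∀ (r : ℝ) (a : 𝒜), L (r • a) = r • L a := fun r a =>
    map_smul (ContinuousLinearMap.mul ℝ 𝒜) r a
  have h1 : ‖(1 : 𝒜 →L[ℝ] 𝒜)‖ ≤ 1 := ContinuousLinearMap.norm_id_le
  have key := jlt_main h1 (L A) (L B)
  have hLexp : ∀ x : 𝒜, L (exp x) = exp (L x) := fun x => by
    letI : NormedAlgebra ℚ 𝒜 := NormedAlgebra.restrictScalars ℚ ℝ 𝒜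
    letI : NormedAlgebra ℚ (𝒜 →L[ℝ] 𝒜) := NormedAlgebra.restrictScalars ℚ ℝ (𝒜 →L[ℝ] 𝒜)
    exact map_exp L hLcont x
  have hLf : ∀ n : ℕ,
      L (((1/2 : ℝ) • (exp ((n : ℝ)⁻¹ • A) * exp ((n : ℝ)⁻¹ • B) +
            exp ((n : ℝ)⁻¹ • B) * exp ((n : ℝ)⁻¹ • A))) ^ n) =
      ((1/2 : ℝ) • (exp ((n : ℝ)⁻¹ • L A) * exp ((n : ℝ)⁻¹ • L B) +
            exp ((n : ℝ)⁻¹ • L B) * exp ((n : ℝ)⁻¹ • L A))) ^ n := by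
    intro n
    simp only [map_pow, map_add, map_mul, hLexp, hLsmul]
  have hLsum : L (exp (A + B)) = exp (L A + L B) := by rw [hLexp, map_add]
  rw [tendsto_iff_norm_sub_tendsto_zero] at key ⊢
  have hb : ∀ n : ℕ,
      ‖((1/2 : ℝ) • (exp ((n : ℝ)⁻¹ • A) * exp ((n : ℝ)⁻¹ • B) +
            exp ((n : ℝ)⁻¹ • B) * exp ((n : ℝ)⁻¹ • A))) ^ n - exp (A + B)‖ ≤
      ‖((1/2 : ℝ) • (exp ((n : ℝ)⁻¹ • L A) * exp ((n : ℝ)⁻¹ • L B) +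
            exp ((n : ℝ)⁻¹ • L B) * exp ((n : ℝ)⁻¹ • L A))) ^ n - exp (L A + L B)‖ *
        ‖(1 : 𝒜)‖ := by
    intro n
    set z := ((1/2 : ℝ) • (exp ((n : ℝ)⁻¹ • A) * exp ((n : ℝ)⁻¹ • B) +
            exp ((n : ℝ)⁻¹ • B) * exp ((n : ℝ)⁻¹ • A))) ^ n - exp (A + B) with hz
    have hLz : L z = ((1/2 : ℝ) • (exp ((n : ℝ)⁻¹ • L A) * exp ((n : ℝ)⁻¹ • L B) +
            exp ((n : ℝ)⁻¹ • L B) * exp ((n : ℝ)⁻¹ • L A))) ^ n - exp (L A + L B) := by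
      rw [hz, map_sub, hLf, hLsum]
    calc ‖z‖ = ‖L z 1‖ := by simp [hL_def]
      _ ≤ ‖L z‖ * ‖(1 : 𝒜)‖ := (L z).le_opNorm 1
      _ = _ := by rw [hLz]
  have hzero : Tendsto (fun n : ℕ =>
      ‖((1/2 : ℝ) • (exp ((n : ℝ)⁻¹ • L A) * exp ((n : ℝ)⁻¹ • L B) +
            exp ((n : ℝ)⁻¹ • L B) * exp ((n : ℝ)⁻¹ • L A))) ^ n - exp (L A + L B)‖ *
        ‖(1 : 𝒜)‖) atTop (nhds 0) := by
    simpa using key.mul_const ‖(1 : 𝒜)‖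
  exact squeeze_zero (fun n => norm_nonneg _) hb hzero
end

section
/- For elements A₁, A₂, A₃ in a Banach algebra and every positive integer n, ‖exp(A₁+A₂+A₃) − ({exp(A₂/n) exp(A₁/n) exp(A₃/n)})^n‖ ≤ (1/(3n²)) · (‖A₁‖+‖A₂‖+‖A₃‖)³ · exp(‖A₁‖+‖A₂‖+‖A₃‖), where {XYZ} = (XYZ + ZYX)/2. -/
noncomputable def jordanTriple {𝒜 : Type*} [NormedRing 𝒜] [NormedAlgebra ℝ 𝒜]
    (A B C : 𝒜) : 𝒜 := (1/2 : ℝ) • (A * B * C + C * B * A)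

open NormedSpace Nat

section Aux
variable {𝒜 : Type*} [NormedRing 𝒜] [NormedAlgebra ℝ 𝒜] [CompleteSpace 𝒜]

lemma tt_norm_pow_mul_le (X V : 𝒜) (m : ℕ) : ‖X ^ m * V‖ ≤ ‖X‖ ^ m * ‖V‖ := by
  cases m with
  | zero => simp
  | succ m =>
      calc ‖X ^ (m+1) * V‖ ≤ ‖X ^ (m+1)‖ * ‖V‖ := norm_mul_le _ _
        _ ≤ ‖X‖ ^ (m+1) * ‖V‖ :=
          mul_le_mul_of_nonneg_right (norm_pow_le' X m.succ_pos) (norm_nonneg V)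

lemma tt_norm_mul_pow_le (V X : 𝒜) (m : ℕ) : ‖V * X ^ m‖ ≤ ‖V‖ * ‖X‖ ^ m := by
  cases m with
  | zero => simp
  | succ m =>
      calc ‖V * X ^ (m+1)‖ ≤ ‖V‖ * ‖X ^ (m+1)‖ := norm_mul_le _ _
        _ ≤ ‖V‖ * ‖X‖ ^ (m+1) :=
          mul_le_mul_of_nonneg_left (norm_pow_le' X m.succ_pos) (norm_nonneg V)

lemma tt_norm_exp_mul_le (X V : 𝒜) : ‖exp X * V‖ ≤ Real.exp ‖X‖ * ‖V‖ := by
  have hsum : Summable fun m : ℕ => ((m ! : ℝ)⁻¹ • X ^ m) := expSeries_summable' X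
  have h1 : exp X * V = ∑' m : ℕ, ((m ! : ℝ)⁻¹ • X ^ m) * V := by
    rw [exp_eq_tsum ℝ]; exact (hsum.tsum_mul_right V).symm
  have hmaj : ∀ m : ℕ, ‖((m ! : ℝ)⁻¹ • X ^ m) * V‖ ≤ ‖X‖ ^ m / m ! * ‖V‖ := by
    intro m
    rw [smul_mul_assoc, norm_smul, Real.norm_eq_abs, abs_inv, Nat.abs_cast]
    calc ((m ! : ℝ))⁻¹ * ‖X ^ m * V‖ ≤ ((m ! : ℝ))⁻¹ * (‖X‖ ^ m * ‖V‖) := by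
          gcongr
          exact tt_norm_pow_mul_le X V m
      _ = ‖X‖ ^ m / m ! * ‖V‖ := by ring
  have hs : Summable fun m : ℕ => ‖X‖ ^ m / m ! * ‖V‖ :=
    (Real.summable_pow_div_factorial ‖X‖).mul_right _
  rw [h1]
  calc ‖∑' m : ℕ, ((m ! : ℝ)⁻¹ • X ^ m) * V‖ ≤ ∑' m : ℕ, ‖((m ! : ℝ)⁻¹ • X ^ m) * V‖ :=
        norm_tsum_le_tsum_norm (hs.of_nonneg_of_le (fun _ => norm_nonneg _) hmaj)
    _ ≤ ∑' m : ℕ, ‖X‖ ^ m / m ! * ‖V‖ :=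
        Summable.tsum_le_tsum hmaj (hs.of_nonneg_of_le (fun _ => norm_nonneg _) hmaj) hs
    _ = (∑' m : ℕ, ‖X‖ ^ m / m !) * ‖V‖ := (Real.summable_pow_div_factorial ‖X‖).tsum_mul_right _
    _ = Real.exp ‖X‖ * ‖V‖ := by rw [Real.exp_eq_exp_ℝ, exp_eq_tsum_div]

lemma tt_norm_mul_exp_le (V X : 𝒜) : ‖V * exp X‖ ≤ ‖V‖ * Real.exp ‖X‖ := by
  have hsum : Summable fun m : ℕ => ((m ! : ℝ)⁻¹ • X ^ m) := expSeries_summable' X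
  have h1 : V * exp X = ∑' m : ℕ, V * ((m ! : ℝ)⁻¹ • X ^ m) := by
    rw [exp_eq_tsum ℝ]; exact (hsum.tsum_mul_left V).symm
  have hmaj : ∀ m : ℕ, ‖V * ((m ! : ℝ)⁻¹ • X ^ m)‖ ≤ ‖V‖ * (‖X‖ ^ m / m !) := by
    intro m
    rw [mul_smul_comm, norm_smul, Real.norm_eq_abs, abs_inv, Nat.abs_cast]
    calc ((m ! : ℝ))⁻¹ * ‖V * X ^ m‖ ≤ ((m ! : ℝ))⁻¹ * (‖V‖ * ‖X‖ ^ m) := by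
          gcongr
          exact tt_norm_mul_pow_le V X m
      _ = ‖V‖ * (‖X‖ ^ m / m !) := by ring
  have hs : Summable fun m : ℕ => ‖V‖ * (‖X‖ ^ m / m !) :=
    (Real.summable_pow_div_factorial ‖X‖).mul_left _
  rw [h1]
  calc ‖∑' m : ℕ, V * ((m ! : ℝ)⁻¹ • X ^ m)‖ ≤ ∑' m : ℕ, ‖V * ((m ! : ℝ)⁻¹ • X ^ m)‖ :=
        norm_tsum_le_tsum_norm (hs.of_nonneg_of_le (fun _ => norm_nonneg _) hmaj)
    _ ≤ ∑' m : ℕ, ‖V‖ * (‖X‖ ^ m / m !) :=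
        Summable.tsum_le_tsum hmaj (hs.of_nonneg_of_le (fun _ => norm_nonneg _) hmaj) hs
    _ = ‖V‖ * (∑' m : ℕ, ‖X‖ ^ m / m !) := (Real.summable_pow_div_factorial ‖X‖).tsum_mul_left _
    _ = ‖V‖ * Real.exp ‖X‖ := by rw [Real.exp_eq_exp_ℝ, exp_eq_tsum_div]

end Aux

section Aux2
variable {𝒜 : Type*} [NormedRing 𝒜] [NormedAlgebra ℝ 𝒜] [CompleteSpace 𝒜]

/-- second order Taylor polynomial of exp -/
noncomputable def ttT2 (W : 𝒜) : 𝒜 := 1 + W + (2:ℝ)⁻¹ • W ^ 2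

lemma tt_exp_sub_taylor2 (X : 𝒜) :
    exp X - ttT2 X = ∑' m : ℕ, (((m+3)! : ℝ)⁻¹ • X ^ (m+3)) := by
  have hsum : Summable fun m : ℕ => ((m ! : ℝ)⁻¹ • X ^ m) := expSeries_summable' X
  have h3 := Summable.sum_add_tsum_nat_add 3 hsum
  have hr : ∑ i ∈ Finset.range 3, ((i ! : ℝ)⁻¹ • X ^ i) = ttT2 X := by
    rw [Finset.sum_range_succ, Finset.sum_range_succ, Finset.sum_range_one]
    norm_num [ttT2, Nat.factorial]
  rw [exp_eq_tsum ℝ]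
  show (∑' n : ℕ, ((n ! : ℝ)⁻¹ • X ^ n)) - ttT2 X = _
  rw [← h3, hr]
  abel

lemma tt_tail_norm_le (X : 𝒜) :
    ‖exp X - ttT2 X‖ ≤ ∑' m : ℕ, ‖X‖ ^ (m+3) / (m+3)! := by
  have hs : Summable fun m : ℕ => ‖X‖ ^ (m+3) / (m+3)! :=
    (summable_nat_add_iff 3).mpr (Real.summable_pow_div_factorial ‖X‖)
  have hmaj : ∀ m : ℕ, ‖(((m+3)! : ℝ)⁻¹ • X ^ (m+3))‖ ≤ ‖X‖ ^ (m+3) / (m+3)! := by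
    intro m
    rw [norm_smul, Real.norm_eq_abs, abs_inv, Nat.abs_cast]
    rw [inv_mul_eq_div, div_le_div_iff_of_pos_right (by positivity)]
    exact norm_pow_le' X (by omega)
  rw [tt_exp_sub_taylor2]
  exact (norm_tsum_le_tsum_norm (hs.of_nonneg_of_le (fun _ => norm_nonneg _) hmaj)).trans
    (Summable.tsum_le_tsum hmaj (hs.of_nonneg_of_le (fun _ => norm_nonneg _) hmaj) hs)

lemma tt_rho_eq (x : ℝ) :
    ∑' m : ℕ, x ^ (m+3) / (m+3)! = Real.exp x - (1 + x + x^2/2) := by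
  have h := tt_exp_sub_taylor2 (𝒜 := ℝ) x
  have ht : ttT2 x = 1 + x + x^2/2 := by
    simp [ttT2, smul_eq_mul]; ring
  rw [ht, ← Real.exp_eq_exp_ℝ] at h
  have hc : ∑' m : ℕ, x ^ (m+3) / ((m+3)! : ℝ) = ∑' m : ℕ, (((m+3)! : ℝ))⁻¹ • x ^ (m+3) :=
    tsum_congr fun m => by rw [smul_eq_mul, inv_mul_eq_div]
  rw [hc, ← h]

lemma tt_norm_exp_sub_taylor2_le (X : 𝒜) :
    ‖exp X - ttT2 X‖ ≤ Real.exp ‖X‖ - (1 + ‖X‖ + ‖X‖^2/2) := by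
  simpa [tt_rho_eq] using tt_tail_norm_le X

lemma tt_rho_le (x : ℝ) (hx : 0 ≤ x) :
    Real.exp x - (1 + x + x^2/2) ≤ x^3/6 * Real.exp x := by
  rw [← tt_rho_eq]
  have hs : Summable fun m : ℕ => x ^ (m+3) / (m+3)! :=
    (summable_nat_add_iff 3).mpr (Real.summable_pow_div_factorial x)
  have key : ∀ m : ℕ, x ^ (m+3) / (m+3)! ≤ x^3/6 * (x ^ m / m !) := by
    intro m
    have hfac : (6 : ℝ) * m ! ≤ ((m+3)! : ℝ) := by
      have : 6 * m ! ≤ (m+3)! := by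
        rw [show m + 3 = (m+2)+1 by ring, Nat.factorial_succ,
          show m + 2 = (m+1)+1 by ring, Nat.factorial_succ, Nat.factorial_succ]
        calc 6 * m ! = 3 * (2 * (1 * m !)) := by ring
          _ ≤ (m+2+1) * ((m+1+1) * ((m+1) * m !)) := by
              have h1 : (1:ℕ) ≤ m + 1 := by omega
              have h2 : (2:ℕ) ≤ m + 1 + 1 := by omega
              have h3 : (3:ℕ) ≤ m + 2 + 1 := by omega
              exact Nat.mul_le_mul h3 (Nat.mul_le_mul h2 (Nat.mul_le_mul h1 le_rfl))
      exact_mod_cast this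
    have h1 : x ^ (m+3) = x^3 * x^m := by ring
    have h2 : x^3/6*(x^m/(m ! : ℝ)) = x^3*x^m/(6*(m ! : ℝ)) := by ring
    rw [h1, h2]
    have hmp : (0:ℝ) < 6 * (m ! : ℝ) := by positivity
    exact div_le_div_of_nonneg_left (by positivity) hmp hfac |>.trans_eq (by ring) |>.trans (le_refl _) |> (fun h => h)
  calc ∑' m : ℕ, x ^ (m+3) / (m+3)! ≤ ∑' m : ℕ, x^3/6 * (x ^ m / m !) :=
        Summable.tsum_le_tsum key hs ((Real.summable_pow_div_factorial x).mul_left _)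
    _ = x^3/6 * ∑' m : ℕ, x ^ m / m ! := (Real.summable_pow_div_factorial x).tsum_mul_left _
    _ = x^3/6 * Real.exp x := by rw [Real.exp_eq_exp_ℝ, exp_eq_tsum_div]

end Aux2

section Aux3
variable {𝒜 : Type*} [NormedRing 𝒜] [NormedAlgebra ℝ 𝒜] [CompleteSpace 𝒜]

lemma tt_norm_T2_mul_le (X V : 𝒜) : ‖ttT2 X * V‖ ≤ (1 + ‖X‖ + ‖X‖^2/2) * ‖V‖ := by
  have h : ttT2 X * V = V + X * V + (2:ℝ)⁻¹ • (X^2 * V) := by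
    simp [ttT2, add_mul, smul_mul_assoc]
  rw [h]
  have h1 : ‖X * V‖ ≤ ‖X‖ * ‖V‖ := norm_mul_le _ _
  have h2 : ‖(2:ℝ)⁻¹ • (X^2 * V)‖ ≤ (2:ℝ)⁻¹ * (‖X‖^2 * ‖V‖) := by
    rw [norm_smul, Real.norm_eq_abs, abs_of_nonneg (by norm_num : (0:ℝ) ≤ 2⁻¹)]
    gcongr
    exact tt_norm_pow_mul_le X V 2
  calc ‖V + X * V + (2:ℝ)⁻¹ • (X^2 * V)‖ ≤ ‖V‖ + ‖X * V‖ + ‖(2:ℝ)⁻¹ • (X^2 * V)‖ :=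
        norm_add₃_le
    _ ≤ ‖V‖ + ‖X‖ * ‖V‖ + (2:ℝ)⁻¹ * (‖X‖^2 * ‖V‖) := by linarith
    _ = (1 + ‖X‖ + ‖X‖^2/2) * ‖V‖ := by ring

lemma tt_ordering_bound (Y X Z : 𝒜) :
    ‖exp Y * exp X * exp Z - ttT2 Y * ttT2 X * ttT2 Z‖ ≤
      Real.exp ‖Y‖ * Real.exp ‖X‖ * Real.exp ‖Z‖
        - (1 + ‖Y‖ + ‖Y‖^2/2) * (1 + ‖X‖ + ‖X‖^2/2) * (1 + ‖Z‖ + ‖Z‖^2/2) := by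
  set EY := exp Y; set EX := exp X; set EZ := exp Z
  have hsplit : EY * EX * EZ - ttT2 Y * ttT2 X * ttT2 Z =
      ((EY - ttT2 Y) * EX) * EZ + ttT2 Y * ((EX - ttT2 X) * EZ)
        + ttT2 Y * (ttT2 X * (EZ - ttT2 Z)) := by noncomm_ring
  have hy := tt_norm_exp_sub_taylor2_le Y
  have hx := tt_norm_exp_sub_taylor2_le X
  have hz := tt_norm_exp_sub_taylor2_le Z
  have h1 : ‖((EY - ttT2 Y) * EX) * EZ‖ ≤
      (Real.exp ‖Y‖ - (1 + ‖Y‖ + ‖Y‖^2/2)) * Real.exp ‖X‖ * Real.exp ‖Z‖ := by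
    calc ‖((EY - ttT2 Y) * EX) * EZ‖ ≤ ‖(EY - ttT2 Y) * EX‖ * Real.exp ‖Z‖ :=
          tt_norm_mul_exp_le _ Z
      _ ≤ (‖EY - ttT2 Y‖ * Real.exp ‖X‖) * Real.exp ‖Z‖ := by
          gcongr; exact tt_norm_mul_exp_le _ X
      _ ≤ (Real.exp ‖Y‖ - (1 + ‖Y‖ + ‖Y‖^2/2)) * Real.exp ‖X‖ * Real.exp ‖Z‖ := by
          gcongr
  have h2 : ‖ttT2 Y * ((EX - ttT2 X) * EZ)‖ ≤
      (1 + ‖Y‖ + ‖Y‖^2/2) * ((Real.exp ‖X‖ - (1 + ‖X‖ + ‖X‖^2/2)) * Real.exp ‖Z‖) := by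
    calc ‖ttT2 Y * ((EX - ttT2 X) * EZ)‖ ≤ (1 + ‖Y‖ + ‖Y‖^2/2) * ‖(EX - ttT2 X) * EZ‖ :=
          tt_norm_T2_mul_le Y _
      _ ≤ (1 + ‖Y‖ + ‖Y‖^2/2) * ((Real.exp ‖X‖ - (1 + ‖X‖ + ‖X‖^2/2)) * Real.exp ‖Z‖) := by
          have : ‖(EX - ttT2 X) * EZ‖ ≤ ‖EX - ttT2 X‖ * Real.exp ‖Z‖ := tt_norm_mul_exp_le _ Z
          have hpos : (0:ℝ) ≤ 1 + ‖Y‖ + ‖Y‖^2/2 := by positivity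
          have : ‖(EX - ttT2 X) * EZ‖ ≤ (Real.exp ‖X‖ - (1 + ‖X‖ + ‖X‖^2/2)) * Real.exp ‖Z‖ :=
            this.trans (by gcongr)
          exact mul_le_mul_of_nonneg_left this hpos
  have h3 : ‖ttT2 Y * (ttT2 X * (EZ - ttT2 Z))‖ ≤
      (1 + ‖Y‖ + ‖Y‖^2/2) * ((1 + ‖X‖ + ‖X‖^2/2) * (Real.exp ‖Z‖ - (1 + ‖Z‖ + ‖Z‖^2/2))) := by
    calc ‖ttT2 Y * (ttT2 X * (EZ - ttT2 Z))‖ ≤ (1 + ‖Y‖ + ‖Y‖^2/2) * ‖ttT2 X * (EZ - ttT2 Z)‖ :=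
          tt_norm_T2_mul_le Y _
      _ ≤ (1 + ‖Y‖ + ‖Y‖^2/2) * ((1 + ‖X‖ + ‖X‖^2/2) * (Real.exp ‖Z‖ - (1 + ‖Z‖ + ‖Z‖^2/2))) := by
          have hYpos : (0:ℝ) ≤ 1 + ‖Y‖ + ‖Y‖^2/2 := by positivity
          have hXpos : (0:ℝ) ≤ 1 + ‖X‖ + ‖X‖^2/2 := by positivity
          have h' : ‖ttT2 X * (EZ - ttT2 Z)‖ ≤ (1 + ‖X‖ + ‖X‖^2/2) * ‖EZ - ttT2 Z‖ :=
            tt_norm_T2_mul_le X _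
          have h'' : ‖ttT2 X * (EZ - ttT2 Z)‖ ≤
              (1 + ‖X‖ + ‖X‖^2/2) * (Real.exp ‖Z‖ - (1 + ‖Z‖ + ‖Z‖^2/2)) :=
            h'.trans (mul_le_mul_of_nonneg_left hz hXpos)
          exact mul_le_mul_of_nonneg_left h'' hYpos
  rw [hsplit]
  calc ‖((EY - ttT2 Y) * EX) * EZ + ttT2 Y * ((EX - ttT2 X) * EZ)
        + ttT2 Y * (ttT2 X * (EZ - ttT2 Z))‖
      ≤ ‖((EY - ttT2 Y) * EX) * EZ‖ + ‖ttT2 Y * ((EX - ttT2 X) * EZ)‖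
        + ‖ttT2 Y * (ttT2 X * (EZ - ttT2 Z))‖ := norm_add₃_le
    _ ≤ _ := by
        have := h1; have := h2; have := h3
        nlinarith [h1, h2, h3]

end Aux3

section Aux4
variable {𝒜 : Type*} [NormedRing 𝒜] [NormedAlgebra ℝ 𝒜] [CompleteSpace 𝒜]

lemma tt_pair {c : ℝ} (hc : 0 ≤ c) {M M' : 𝒜} {μ : ℝ} (h1 : ‖M‖ ≤ μ) (h2 : ‖M'‖ ≤ μ) :
    ‖c • (M + M')‖ ≤ c * (2 * μ) := by
  rw [norm_smul, Real.norm_eq_abs, abs_of_nonneg hc]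
  have := norm_add_le M M'
  have := norm_nonneg M
  nlinarith

lemma tt_norm_pp (a b : 𝒜) {i j : ℕ} (hi : 0 < i) (hj : 0 < j) :
    ‖a^i * b^j‖ ≤ ‖a‖^i * ‖b‖^j :=
  (norm_mul_le _ _).trans
    (mul_le_mul (norm_pow_le' a hi) (norm_pow_le' b hj) (norm_nonneg _) (by positivity))

lemma tt_norm_ppp (a b c : 𝒜) {i j k : ℕ} (hi : 0 < i) (hj : 0 < j) (hk : 0 < k) :
    ‖a^i * b^j * c^k‖ ≤ ‖a‖^i * ‖b‖^j * ‖c‖^k :=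
  (norm_mul_le _ _).trans
    (mul_le_mul (tt_norm_pp a b hi hj) (norm_pow_le' c hk) (norm_nonneg _) (by positivity))

lemma tt_D_eq (X Y Z : 𝒜) :
    ttT2 Y * ttT2 X * ttT2 Z + ttT2 Z * ttT2 X * ttT2 Y - (2:ℝ) • ttT2 (X + Y + Z) =
      (1:ℝ)⁻¹ • (Y^1*X^1*Z^1 + Z^1*X^1*Y^1)
      + (2:ℝ)⁻¹ • (Y^2*X^1 + X^1*Y^2)
      + (2:ℝ)⁻¹ • (Y^2*Z^1 + Z^1*Y^2)
      + (2:ℝ)⁻¹ • (Y^1*X^2 + X^2*Y^1)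
      + (2:ℝ)⁻¹ • (X^2*Z^1 + Z^1*X^2)
      + (2:ℝ)⁻¹ • (Y^1*Z^2 + Z^2*Y^1)
      + (2:ℝ)⁻¹ • (X^1*Z^2 + Z^2*X^1)
      + (4:ℝ)⁻¹ • (Y^2*X^2 + X^2*Y^2)
      + (4:ℝ)⁻¹ • (Y^2*Z^2 + Z^2*Y^2)
      + (4:ℝ)⁻¹ • (X^2*Z^2 + Z^2*X^2)
      + (2:ℝ)⁻¹ • (Y^2*X^1*Z^1 + Z^1*X^1*Y^2)
      + (2:ℝ)⁻¹ • (Y^1*X^2*Z^1 + Z^1*X^2*Y^1)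
      + (2:ℝ)⁻¹ • (Y^1*X^1*Z^2 + Z^2*X^1*Y^1)
      + (4:ℝ)⁻¹ • (Y^2*X^2*Z^1 + Z^1*X^2*Y^2)
      + (4:ℝ)⁻¹ • (Y^2*X^1*Z^2 + Z^2*X^1*Y^2)
      + (4:ℝ)⁻¹ • (Y^1*X^2*Z^2 + Z^2*X^2*Y^1)
      + (8:ℝ)⁻¹ • (Y^2*X^2*Z^2 + Z^2*X^2*Y^2) := by
  simp only [ttT2, pow_two, pow_one, mul_add, add_mul, smul_add, smul_mul_assoc, mul_smul_comm,
    smul_smul, one_mul, mul_one, mul_assoc]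
  module

lemma tt_poly_bound (X Y Z : 𝒜) :
    ‖ttT2 Y * ttT2 X * ttT2 Z + ttT2 Z * ttT2 X * ttT2 Y - (2:ℝ) • ttT2 (X + Y + Z)‖ ≤
      2 * ((1+‖Y‖+‖Y‖^2/2)*(1+‖X‖+‖X‖^2/2)*(1+‖Z‖+‖Z‖^2/2)
        - (1 + (‖X‖+‖Y‖+‖Z‖) + (‖X‖+‖Y‖+‖Z‖)^2/2)) := by
  rw [tt_D_eq]
  have h1 : ‖(1:ℝ)⁻¹ • (Y^1*X^1*Z^1 + Z^1*X^1*Y^1)‖ ≤ (1:ℝ)⁻¹ * (2 * (‖Y‖^1*‖X‖^1*‖Z‖^1)) :=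
    tt_pair (by norm_num) (tt_norm_ppp Y X Z (by norm_num) (by norm_num) (by norm_num)) ((tt_norm_ppp Z X Y (by norm_num) (by norm_num) (by norm_num)).trans_eq (by ring))
  have h2 : ‖(2:ℝ)⁻¹ • (Y^2*X^1 + X^1*Y^2)‖ ≤ (2:ℝ)⁻¹ * (2 * (‖Y‖^2*‖X‖^1)) :=
    tt_pair (by norm_num) (tt_norm_pp Y X (by norm_num) (by norm_num)) ((tt_norm_pp X Y (by norm_num) (by norm_num)).trans_eq (by ring))
  have h3 : ‖(2:ℝ)⁻¹ • (Y^2*Z^1 + Z^1*Y^2)‖ ≤ (2:ℝ)⁻¹ * (2 * (‖Y‖^2*‖Z‖^1)) :=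
    tt_pair (by norm_num) (tt_norm_pp Y Z (by norm_num) (by norm_num)) ((tt_norm_pp Z Y (by norm_num) (by norm_num)).trans_eq (by ring))
  have h4 : ‖(2:ℝ)⁻¹ • (Y^1*X^2 + X^2*Y^1)‖ ≤ (2:ℝ)⁻¹ * (2 * (‖Y‖^1*‖X‖^2)) :=
    tt_pair (by norm_num) (tt_norm_pp Y X (by norm_num) (by norm_num)) ((tt_norm_pp X Y (by norm_num) (by norm_num)).trans_eq (by ring))
  have h5 : ‖(2:ℝ)⁻¹ • (X^2*Z^1 + Z^1*X^2)‖ ≤ (2:ℝ)⁻¹ * (2 * (‖X‖^2*‖Z‖^1)) :=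
    tt_pair (by norm_num) (tt_norm_pp X Z (by norm_num) (by norm_num)) ((tt_norm_pp Z X (by norm_num) (by norm_num)).trans_eq (by ring))
  have h6 : ‖(2:ℝ)⁻¹ • (Y^1*Z^2 + Z^2*Y^1)‖ ≤ (2:ℝ)⁻¹ * (2 * (‖Y‖^1*‖Z‖^2)) :=
    tt_pair (by norm_num) (tt_norm_pp Y Z (by norm_num) (by norm_num)) ((tt_norm_pp Z Y (by norm_num) (by norm_num)).trans_eq (by ring))
  have h7 : ‖(2:ℝ)⁻¹ • (X^1*Z^2 + Z^2*X^1)‖ ≤ (2:ℝ)⁻¹ * (2 * (‖X‖^1*‖Z‖^2)) :=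
    tt_pair (by norm_num) (tt_norm_pp X Z (by norm_num) (by norm_num)) ((tt_norm_pp Z X (by norm_num) (by norm_num)).trans_eq (by ring))
  have h8 : ‖(4:ℝ)⁻¹ • (Y^2*X^2 + X^2*Y^2)‖ ≤ (4:ℝ)⁻¹ * (2 * (‖Y‖^2*‖X‖^2)) :=
    tt_pair (by norm_num) (tt_norm_pp Y X (by norm_num) (by norm_num)) ((tt_norm_pp X Y (by norm_num) (by norm_num)).trans_eq (by ring))
  have h9 : ‖(4:ℝ)⁻¹ • (Y^2*Z^2 + Z^2*Y^2)‖ ≤ (4:ℝ)⁻¹ * (2 * (‖Y‖^2*‖Z‖^2)) :=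
    tt_pair (by norm_num) (tt_norm_pp Y Z (by norm_num) (by norm_num)) ((tt_norm_pp Z Y (by norm_num) (by norm_num)).trans_eq (by ring))
  have h10 : ‖(4:ℝ)⁻¹ • (X^2*Z^2 + Z^2*X^2)‖ ≤ (4:ℝ)⁻¹ * (2 * (‖X‖^2*‖Z‖^2)) :=
    tt_pair (by norm_num) (tt_norm_pp X Z (by norm_num) (by norm_num)) ((tt_norm_pp Z X (by norm_num) (by norm_num)).trans_eq (by ring))
  have h11 : ‖(2:ℝ)⁻¹ • (Y^2*X^1*Z^1 + Z^1*X^1*Y^2)‖ ≤ (2:ℝ)⁻¹ * (2 * (‖Y‖^2*‖X‖^1*‖Z‖^1)) :=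
    tt_pair (by norm_num) (tt_norm_ppp Y X Z (by norm_num) (by norm_num) (by norm_num)) ((tt_norm_ppp Z X Y (by norm_num) (by norm_num) (by norm_num)).trans_eq (by ring))
  have h12 : ‖(2:ℝ)⁻¹ • (Y^1*X^2*Z^1 + Z^1*X^2*Y^1)‖ ≤ (2:ℝ)⁻¹ * (2 * (‖Y‖^1*‖X‖^2*‖Z‖^1)) :=
    tt_pair (by norm_num) (tt_norm_ppp Y X Z (by norm_num) (by norm_num) (by norm_num)) ((tt_norm_ppp Z X Y (by norm_num) (by norm_num) (by norm_num)).trans_eq (by ring))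
  have h13 : ‖(2:ℝ)⁻¹ • (Y^1*X^1*Z^2 + Z^2*X^1*Y^1)‖ ≤ (2:ℝ)⁻¹ * (2 * (‖Y‖^1*‖X‖^1*‖Z‖^2)) :=
    tt_pair (by norm_num) (tt_norm_ppp Y X Z (by norm_num) (by norm_num) (by norm_num)) ((tt_norm_ppp Z X Y (by norm_num) (by norm_num) (by norm_num)).trans_eq (by ring))
  have h14 : ‖(4:ℝ)⁻¹ • (Y^2*X^2*Z^1 + Z^1*X^2*Y^2)‖ ≤ (4:ℝ)⁻¹ * (2 * (‖Y‖^2*‖X‖^2*‖Z‖^1)) :=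
    tt_pair (by norm_num) (tt_norm_ppp Y X Z (by norm_num) (by norm_num) (by norm_num)) ((tt_norm_ppp Z X Y (by norm_num) (by norm_num) (by norm_num)).trans_eq (by ring))
  have h15 : ‖(4:ℝ)⁻¹ • (Y^2*X^1*Z^2 + Z^2*X^1*Y^2)‖ ≤ (4:ℝ)⁻¹ * (2 * (‖Y‖^2*‖X‖^1*‖Z‖^2)) :=
    tt_pair (by norm_num) (tt_norm_ppp Y X Z (by norm_num) (by norm_num) (by norm_num)) ((tt_norm_ppp Z X Y (by norm_num) (by norm_num) (by norm_num)).trans_eq (by ring))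
  have h16 : ‖(4:ℝ)⁻¹ • (Y^1*X^2*Z^2 + Z^2*X^2*Y^1)‖ ≤ (4:ℝ)⁻¹ * (2 * (‖Y‖^1*‖X‖^2*‖Z‖^2)) :=
    tt_pair (by norm_num) (tt_norm_ppp Y X Z (by norm_num) (by norm_num) (by norm_num)) ((tt_norm_ppp Z X Y (by norm_num) (by norm_num) (by norm_num)).trans_eq (by ring))
  have h17 : ‖(8:ℝ)⁻¹ • (Y^2*X^2*Z^2 + Z^2*X^2*Y^2)‖ ≤ (8:ℝ)⁻¹ * (2 * (‖Y‖^2*‖X‖^2*‖Z‖^2)) :=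
    tt_pair (by norm_num) (tt_norm_ppp Y X Z (by norm_num) (by norm_num) (by norm_num)) ((tt_norm_ppp Z X Y (by norm_num) (by norm_num) (by norm_num)).trans_eq (by ring))
  exact (norm_add_le_of_le (norm_add_le_of_le (norm_add_le_of_le (norm_add_le_of_le (norm_add_le_of_le (norm_add_le_of_le (norm_add_le_of_le (norm_add_le_of_le (norm_add_le_of_le (norm_add_le_of_le (norm_add_le_of_le (norm_add_le_of_le (norm_add_le_of_le (norm_add_le_of_le (norm_add_le_of_le (norm_add_le_of_le h1 h2) h3) h4) h5) h6) h7) h8) h9) h10) h11) h12) h13) h14) h15) h16) h17).trans (le_of_eq (by ring))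

end Aux4

section Aux5
variable {𝒜 : Type*} [NormedRing 𝒜] [NormedAlgebra ℝ 𝒜] [CompleteSpace 𝒜]

set_option maxHeartbeats 1000000 in
lemma tt_rho_mono {u v : ℝ} (hu : 0 ≤ u) (huv : u ≤ v) :
    Real.exp u - (1 + u + u^2/2) ≤ Real.exp v - (1 + v + v^2/2) := by
  have s1 : Summable (fun m : ℕ => u ^ (m+3) / (m+3)!) :=
    (summable_nat_add_iff 3).mpr (Real.summable_pow_div_factorial u)
  have s2 : Summable (fun m : ℕ => v ^ (m+3) / (m+3)!) :=
    (summable_nat_add_iff 3).mpr (Real.summable_pow_div_factorial v)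
  calc Real.exp u - (1 + u + u^2/2) = ∑' m : ℕ, u ^ (m+3) / (m+3)! := (tt_rho_eq u).symm
    _ ≤ ∑' m : ℕ, v ^ (m+3) / (m+3)! := by
        refine Summable.tsum_le_tsum (fun m => ?_) s1 s2
        have hp : u ^ (m+3) ≤ v ^ (m+3) := pow_le_pow_left₀ hu huv _
        exact div_le_div_of_nonneg_right hp (by positivity)
    _ = Real.exp v - (1 + v + v^2/2) := tt_rho_eq v

lemma tt_core (X Y Z : 𝒜) :
    ‖exp (X + Y + Z) - jordanTriple (exp Y) (exp X) (exp Z)‖ ≤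
      2 * (Real.exp (‖X‖+‖Y‖+‖Z‖) - (1 + (‖X‖+‖Y‖+‖Z‖) + (‖X‖+‖Y‖+‖Z‖)^2/2)) := by
  set s := ‖X‖+‖Y‖+‖Z‖ with hs
  set W := X + Y + Z with hW
  set G := (1/2:ℝ) • (ttT2 Y * ttT2 X * ttT2 Z + ttT2 Z * ttT2 X * ttT2 Y) with hG
  set J := jordanTriple (exp Y) (exp X) (exp Z) with hJ
  have hdecomp : exp W - J = (exp W - ttT2 W) + (ttT2 W - G) + (G - J) := by abel
  have hWle : ‖W‖ ≤ s := norm_add₃_le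
  have h1 : ‖exp W - ttT2 W‖ ≤ Real.exp s - (1 + s + s^2/2) :=
    (tt_norm_exp_sub_taylor2_le W).trans (tt_rho_mono (norm_nonneg W) hWle)
  have h2 : ‖ttT2 W - G‖ ≤
      (1+‖Y‖+‖Y‖^2/2)*(1+‖X‖+‖X‖^2/2)*(1+‖Z‖+‖Z‖^2/2) - (1 + s + s^2/2) := by
    have e1 : ttT2 W - G = (-(1/2:ℝ)) •
        (ttT2 Y * ttT2 X * ttT2 Z + ttT2 Z * ttT2 X * ttT2 Y - (2:ℝ) • ttT2 W) := by
      rw [hG]; module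
    rw [e1, norm_smul, Real.norm_eq_abs]
    have : |(-(1/2):ℝ)| = 1/2 := by norm_num
    rw [this]
    have := tt_poly_bound X Y Z
    rw [← hW] at this
    linarith
  have h3 : ‖G - J‖ ≤ (1/2:ℝ) *
      ((Real.exp ‖Y‖ * Real.exp ‖X‖ * Real.exp ‖Z‖
          - (1+‖Y‖+‖Y‖^2/2)*(1+‖X‖+‖X‖^2/2)*(1+‖Z‖+‖Z‖^2/2))
        + (Real.exp ‖Z‖ * Real.exp ‖X‖ * Real.exp ‖Y‖
          - (1+‖Z‖+‖Z‖^2/2)*(1+‖X‖+‖X‖^2/2)*(1+‖Y‖+‖Y‖^2/2))) := by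
    have e1 : G - J = (1/2:ℝ) •
        ((ttT2 Y * ttT2 X * ttT2 Z - exp Y * exp X * exp Z)
          + (ttT2 Z * ttT2 X * ttT2 Y - exp Z * exp X * exp Y)) := by
      rw [hG, hJ, jordanTriple]; module
    rw [e1, norm_smul, Real.norm_eq_abs]
    have habs : |(1/2:ℝ)| = 1/2 := by norm_num
    rw [habs]
    have b1 : ‖ttT2 Y * ttT2 X * ttT2 Z - exp Y * exp X * exp Z‖ ≤
        Real.exp ‖Y‖ * Real.exp ‖X‖ * Real.exp ‖Z‖
          - (1+‖Y‖+‖Y‖^2/2)*(1+‖X‖+‖X‖^2/2)*(1+‖Z‖+‖Z‖^2/2) := by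
      rw [norm_sub_rev]; exact tt_ordering_bound Y X Z
    have b2 : ‖ttT2 Z * ttT2 X * ttT2 Y - exp Z * exp X * exp Y‖ ≤
        Real.exp ‖Z‖ * Real.exp ‖X‖ * Real.exp ‖Y‖
          - (1+‖Z‖+‖Z‖^2/2)*(1+‖X‖+‖X‖^2/2)*(1+‖Y‖+‖Y‖^2/2) := by
      rw [norm_sub_rev]; exact tt_ordering_bound Z X Y
    have := norm_add_le_of_le b1 b2
    nlinarith [this]
  have hyxz : Real.exp ‖Y‖ * Real.exp ‖X‖ * Real.exp ‖Z‖ = Real.exp s := by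
    rw [← Real.exp_add, ← Real.exp_add]; congr 1; rw [hs]; ring
  have hzxy : Real.exp ‖Z‖ * Real.exp ‖X‖ * Real.exp ‖Y‖ = Real.exp s := by
    rw [← Real.exp_add, ← Real.exp_add]; congr 1; rw [hs]; ring
  have hsym : (1+‖Z‖+‖Z‖^2/2)*(1+‖X‖+‖X‖^2/2)*(1+‖Y‖+‖Y‖^2/2)
      = (1+‖Y‖+‖Y‖^2/2)*(1+‖X‖+‖X‖^2/2)*(1+‖Z‖+‖Z‖^2/2) := by ring
  rw [hdecomp]
  calc ‖(exp W - ttT2 W) + (ttT2 W - G) + (G - J)‖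
      ≤ ‖exp W - ttT2 W‖ + ‖ttT2 W - G‖ + ‖G - J‖ := norm_add₃_le
    _ ≤ 2 * (Real.exp s - (1 + s + s^2/2)) := by
        rw [hyxz, hzxy, hsym] at h3
        linarith

lemma tt_norm_mul_J_le (X Y Z V : 𝒜) :
    ‖V * jordanTriple (exp Y) (exp X) (exp Z)‖ ≤
      ‖V‖ * Real.exp (‖X‖+‖Y‖+‖Z‖) := by
  have e1 : V * jordanTriple (exp Y) (exp X) (exp Z) =
      (1/2:ℝ) • (V * exp Y * exp X * exp Z + V * exp Z * exp X * exp Y) := by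
    rw [jordanTriple, mul_smul_comm, mul_add]
    congr 1 <;> noncomm_ring
  rw [e1, norm_smul, Real.norm_eq_abs]
  have habs : |(1/2:ℝ)| = 1/2 := by norm_num
  rw [habs]
  have b1 : ‖V * exp Y * exp X * exp Z‖ ≤ ‖V‖ * Real.exp (‖X‖+‖Y‖+‖Z‖) := by
    calc ‖V * exp Y * exp X * exp Z‖ ≤ ‖V * exp Y * exp X‖ * Real.exp ‖Z‖ :=
          tt_norm_mul_exp_le _ _
      _ ≤ (‖V * exp Y‖ * Real.exp ‖X‖) * Real.exp ‖Z‖ := by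
          gcongr; exact tt_norm_mul_exp_le _ _
      _ ≤ ((‖V‖ * Real.exp ‖Y‖) * Real.exp ‖X‖) * Real.exp ‖Z‖ := by
          gcongr; exact tt_norm_mul_exp_le _ _
      _ = ‖V‖ * Real.exp (‖X‖+‖Y‖+‖Z‖) := by
          rw [show ‖X‖+‖Y‖+‖Z‖ = ‖Y‖+‖X‖+‖Z‖ by ring, Real.exp_add, Real.exp_add]; ring
  have b2 : ‖V * exp Z * exp X * exp Y‖ ≤ ‖V‖ * Real.exp (‖X‖+‖Y‖+‖Z‖) := by
    calc ‖V * exp Z * exp X * exp Y‖ ≤ ‖V * exp Z * exp X‖ * Real.exp ‖Y‖ :=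
          tt_norm_mul_exp_le _ _
      _ ≤ (‖V * exp Z‖ * Real.exp ‖X‖) * Real.exp ‖Y‖ := by
          gcongr; exact tt_norm_mul_exp_le _ _
      _ ≤ ((‖V‖ * Real.exp ‖Z‖) * Real.exp ‖X‖) * Real.exp ‖Y‖ := by
          gcongr; exact tt_norm_mul_exp_le _ _
      _ = ‖V‖ * Real.exp (‖X‖+‖Y‖+‖Z‖) := by
          rw [show ‖X‖+‖Y‖+‖Z‖ = ‖Z‖+‖X‖+‖Y‖ by ring, Real.exp_add, Real.exp_add]; ring
  have := norm_add_le_of_le b1 b2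
  nlinarith [this]

lemma tt_pow_sub_pow {S T : 𝒜} {M δ : ℝ} (hM : 0 ≤ M) (hδ : ‖S - T‖ ≤ δ)
    (hS : ∀ V : 𝒜, ‖S * V‖ ≤ M * ‖V‖) (hT : ∀ V : 𝒜, ‖V * T‖ ≤ ‖V‖ * M) :
    ∀ k : ℕ, ‖S^(k+1) - T^(k+1)‖ ≤ ((k:ℝ)+1) * M^k * δ := by
  have hTk : ∀ (V : 𝒜) (k : ℕ), ‖V * T^k‖ ≤ ‖V‖ * M^k := by
    intro V k
    induction k with
    | zero => simp
    | succ k ih =>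
        rw [pow_succ, ← mul_assoc]
        calc ‖V * T^k * T‖ ≤ ‖V * T^k‖ * M := hT _
          _ ≤ ‖V‖ * M^k * M := mul_le_mul_of_nonneg_right ih hM
          _ = ‖V‖ * M^(k+1) := by rw [pow_succ]; ring
  intro k
  induction k with
  | zero => simpa using hδ
  | succ k ih =>
      have hid : S^(k+2) - T^(k+2) = S * (S^(k+1) - T^(k+1)) + (S - T) * T^(k+1) := by
        rw [_root_.pow_succ' S (k+1), _root_.pow_succ' T (k+1)]
        noncomm_ring
      rw [show k + 1 + 1 = k + 2 from rfl, hid]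
      have a1 : ‖S * (S^(k+1) - T^(k+1))‖ ≤ M * (((k:ℝ)+1) * M^k * δ) :=
        (hS _).trans (mul_le_mul_of_nonneg_left ih hM)
      have a2 : ‖(S - T) * T^(k+1)‖ ≤ δ * M^(k+1) := by
        calc ‖(S - T) * T^(k+1)‖ ≤ ‖S - T‖ * M^(k+1) := hTk _ _
          _ ≤ δ * M^(k+1) := mul_le_mul_of_nonneg_right hδ (by positivity)
      calc ‖S * (S^(k+1) - T^(k+1)) + (S - T) * T^(k+1)‖
          ≤ ‖S * (S^(k+1) - T^(k+1))‖ + ‖(S - T) * T^(k+1)‖ := norm_add_le _ _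
        _ ≤ M * (((k:ℝ)+1) * M^k * δ) + δ * M^(k+1) := by linarith
        _ = (((k+1:ℕ):ℝ)+1) * M^(k+1) * δ := by push_cast; rw [pow_succ]; ring

end Aux5

theorem triple_trotter_error {𝒜 : Type*} [NormedRing 𝒜] [NormedAlgebra ℝ 𝒜]
    [CompleteSpace 𝒜] (A₁ A₂ A₃ : 𝒜) (n : ℕ) (hn : 1 ≤ n) :
    ‖NormedSpace.exp (A₁ + A₂ + A₃) -
        (jordanTriple (NormedSpace.exp ((n : ℝ)⁻¹ • A₂)) (NormedSpace.exp ((n : ℝ)⁻¹ • A₁))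
          (NormedSpace.exp ((n : ℝ)⁻¹ • A₃))) ^ n‖ ≤
      1 / (3 * (n : ℝ) ^ 2) * (‖A₁‖ + ‖A₂‖ + ‖A₃‖) ^ 3 * Real.exp (‖A₁‖ + ‖A₂‖ + ‖A₃‖) := by
  have hn0 : (0:ℝ) < (n:ℝ) := by exact_mod_cast hn
  have hne : (n:ℝ) ≠ 0 := hn0.ne'
  set X : 𝒜 := (n:ℝ)⁻¹ • A₁ with hX
  set Y : 𝒜 := (n:ℝ)⁻¹ • A₂ with hY
  set Z : 𝒜 := (n:ℝ)⁻¹ • A₃ with hZ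
  set T := jordanTriple (exp Y) (exp X) (exp Z) with hT
  set s : ℝ := ‖X‖ + ‖Y‖ + ‖Z‖ with hs
  set a : ℝ := ‖A₁‖ + ‖A₂‖ + ‖A₃‖ with ha
  have hs0 : 0 ≤ s := by rw [hs]; positivity
  have hsa : s = (n:ℝ)⁻¹ * a := by
    rw [hs, ha, hX, hY, hZ, norm_smul, norm_smul, norm_smul, Real.norm_eq_abs,
      abs_inv, Nat.abs_cast]
    ring
  have hWsum : A₁ + A₂ + A₃ = n • (X + Y + Z) := by
    rw [hX, hY, hZ, ← smul_add, ← smul_add, ← Nat.cast_smul_eq_nsmul ℝ, smul_smul,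
      mul_inv_cancel₀ hne, one_smul]
  have hexp : exp (A₁ + A₂ + A₃) = exp (X + Y + Z) ^ n := by
    letI : NormedAlgebra ℚ 𝒜 := NormedAlgebra.restrictScalars ℚ ℝ 𝒜
    rw [hWsum, exp_nsmul]
  set S := exp (X + Y + Z) with hS
  have hδ : ‖S - T‖ ≤ 2 * (Real.exp s - (1 + s + s^2/2)) := tt_core X Y Z
  have hSmul : ∀ V : 𝒜, ‖S * V‖ ≤ Real.exp s * ‖V‖ := fun V =>
    (tt_norm_exp_mul_le _ V).trans (mul_le_mul_of_nonneg_right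
      (Real.exp_le_exp.mpr norm_add₃_le) (norm_nonneg V))
  have hTmul : ∀ V : 𝒜, ‖V * T‖ ≤ ‖V‖ * Real.exp s := fun V => tt_norm_mul_J_le X Y Z V
  obtain ⟨m, rfl⟩ : ∃ m, n = m + 1 := ⟨n - 1, by omega⟩
  have key := tt_pow_sub_pow (Real.exp_pos s).le hδ hSmul hTmul m
  rw [hexp]
  refine key.trans ?_
  have hrho := tt_rho_le s hs0
  have hna : ((m:ℝ)+1) * s = a := by
    rw [hsa]
    push_cast
    field_simp
  have hea : Real.exp a = (Real.exp s)^m * Real.exp s := by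
    rw [← hna, show ((m:ℝ)+1)*s = (m:ℝ)*s + s by ring, Real.exp_add, Real.exp_nat_mul]
  calc ((m:ℝ)+1) * (Real.exp s)^m * (2 * (Real.exp s - (1+s+s^2/2)))
      ≤ ((m:ℝ)+1) * (Real.exp s)^m * (2 * (s^3/6 * Real.exp s)) := by
        have h0 : (0:ℝ) ≤ ((m:ℝ)+1) * (Real.exp s)^m := by positivity
        nlinarith [hrho]
    _ = 1 / (3*((m+1:ℕ):ℝ)^2) * a^3 * Real.exp a := by
        rw [hea, ← hna]
        push_cast
        have hm1 : ((m:ℝ)+1) ≠ 0 := by positivity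
        field_simp
        ring
    _ ≤ 1 / (3*((m+1:ℕ):ℝ)^2) * a^3 * Real.exp a := le_refl _
end

section
/- For elements A, B in a Banach algebra, exp(A + B) = lim_{n→∞} [ (1/2)( exp(B/(2n)) exp(A/n) exp(B/(2n)) + exp(B/(2n)) exp(A/n) exp(B/(2n)) ) ]^n, i.e., exp(A+B) = lim_{n→∞} ( exp(B/(2n)) exp(A/n) exp(B/(2n)) )^n (symmetrized Lie–Trotter formula). -/
open NormedSpace Filter

section aux
variable {ℬ : Type*} [NormedRing ℬ] [NormedAlgebra ℝ ℬ] [CompleteSpace ℬ]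

lemma slt_real_tail_eq (t : ℝ) (k : ℕ) : ∑' i : ℕ, t ^ (i + k) / (i + k).factorial
    = Real.exp t - ∑ i ∈ Finset.range k, t ^ i / i.factorial := by
  have hs : Summable (fun i : ℕ => t ^ i / i.factorial) :=
    Real.summable_pow_div_factorial t
  have h := Summable.sum_add_tsum_nat_add (f := fun i : ℕ => t ^ i / i.factorial) k hs
  rw [Real.exp_eq_exp_ℝ, exp_eq_tsum_div]
  linarith [h]

lemma slt_norm_tail_le (x : ℬ) (k : ℕ) (hk : 0 < k) :
    ‖exp x - ∑ i ∈ Finset.range k, (i.factorial⁻¹ : ℝ) • x ^ i‖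
      ≤ ∑' i : ℕ, ‖x‖ ^ (i + k) / (i + k).factorial := by
  have hs : Summable (fun i : ℕ => ‖(i.factorial⁻¹ : ℝ) • x ^ i‖) :=
    norm_expSeries_summable' x
  have hs' : Summable (fun i : ℕ => (i.factorial⁻¹ : ℝ) • x ^ i) := hs.of_norm
  have heq : exp x - ∑ i ∈ Finset.range k, (i.factorial⁻¹ : ℝ) • x ^ i
      = ∑' i : ℕ, ((i + k).factorial⁻¹ : ℝ) • x ^ (i + k) := by
    have h := Summable.sum_add_tsum_nat_add (f := fun i : ℕ => (i.factorial⁻¹ : ℝ) • x ^ i) k hs'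
    rw [exp_eq_tsum ℝ]
    show (∑' n : ℕ, ((n.factorial : ℝ)⁻¹ : ℝ) • x ^ n) - _ = _
    rw [← h]; abel
  rw [heq]
  have hsn : Summable (fun i : ℕ => ‖((i + k).factorial⁻¹ : ℝ) • x ^ (i + k)‖) :=
    (summable_nat_add_iff k).2 hs
  have hsr : Summable (fun i : ℕ => ‖x‖ ^ (i + k) / ((i + k).factorial : ℝ)) :=
    (summable_nat_add_iff (f := fun i : ℕ => ‖x‖ ^ i / (i.factorial : ℝ)) k).2
      (Real.summable_pow_div_factorial ‖x‖)
  refine (norm_tsum_le_tsum_norm hsn).trans ?_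
  refine Summable.tsum_le_tsum (fun i => ?_) hsn hsr
  rw [norm_smul, norm_inv, Real.norm_natCast]
  have h1 : ‖x ^ (i + k)‖ ≤ ‖x‖ ^ (i + k) := norm_pow_le' x (by omega)
  calc ((i + k).factorial : ℝ)⁻¹ * ‖x ^ (i + k)‖
      ≤ ((i + k).factorial : ℝ)⁻¹ * ‖x‖ ^ (i + k) := by
        exact mul_le_mul_of_nonneg_left h1 (by positivity)
    _ = ‖x‖ ^ (i + k) / (i + k).factorial := by ring

lemma slt_real_tail_le (t : ℝ) (ht : 0 ≤ t) (k : ℕ) :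
    ∑' i : ℕ, t ^ (i + k) / (i + k).factorial ≤ t ^ k * Real.exp t := by
  have hs : Summable (fun i : ℕ => t ^ i / i.factorial) :=
    Real.summable_pow_div_factorial t
  have h : ∑' i : ℕ, t ^ (i + k) / (i + k).factorial
      ≤ ∑' i : ℕ, t ^ k * (t ^ i / i.factorial) := by
    refine Summable.tsum_le_tsum (fun i => ?_)
      ((summable_nat_add_iff (f := fun i : ℕ => t ^ i / (i.factorial : ℝ)) k).2 hs)
      (hs.mul_left _)
    rw [pow_add, mul_comm (t ^ i) (t ^ k), mul_div_assoc]
    have h1 : (i.factorial : ℝ) ≤ (i + k).factorial := by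
      exact_mod_cast Nat.factorial_le (by omega)
    have h2 : (0:ℝ) < i.factorial := by positivity
    have h3 : t ^ i / ((i + k).factorial : ℝ) ≤ t ^ i / i.factorial := by gcongr
    exact mul_le_mul_of_nonneg_left h3 (pow_nonneg ht k)
  refine h.trans ?_
  rw [tsum_mul_left, Real.exp_eq_exp_ℝ, exp_eq_tsum_div]

lemma slt_norm_exp_sub_one_le (x : ℬ) : ‖exp x - 1‖ ≤ ‖x‖ * Real.exp ‖x‖ := by
  have h := (slt_norm_tail_le x 1 one_pos).trans (slt_real_tail_le ‖x‖ (norm_nonneg x) 1)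
  simpa [Finset.sum_range_one] using h

lemma slt_norm_exp_le (h1 : ‖(1:ℬ)‖ ≤ 1) (x : ℬ) : ‖exp x‖ ≤ Real.exp ‖x‖ := by
  have h := (slt_norm_tail_le x 1 one_pos).trans_eq (slt_real_tail_eq ‖x‖ 1)
  simp only [Finset.sum_range_one, pow_zero, Nat.factorial_zero, Nat.cast_one, inv_one,
    one_smul, div_one] at h
  have h2 : ‖exp x‖ ≤ ‖(1:ℬ)‖ + ‖exp x - 1‖ := by
    have := norm_add_le (1:ℬ) (exp x - 1); simpa using this
  linarith

lemma slt_norm_exp_sub_one_sub_le (x : ℬ) :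
    ‖exp x - 1 - x‖ ≤ ‖x‖ ^ 2 * Real.exp ‖x‖ := by
  have h := (slt_norm_tail_le x 2 two_pos).trans (slt_real_tail_le ‖x‖ (norm_nonneg x) 2)
  have e : ∑ i ∈ Finset.range 2, ((i.factorial : ℝ)⁻¹ : ℝ) • x ^ i = 1 + x := by
    simp [Finset.sum_range_succ]
  rw [e] at h
  simpa [sub_sub] using h

omit [NormedAlgebra ℝ ℬ] [CompleteSpace ℬ] in
lemma slt_norm_pow_le (h1 : ‖(1:ℬ)‖ ≤ 1) {y : ℬ} {M : ℝ} (hy : ‖y‖ ≤ M) (hM : 0 ≤ M) :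
    ∀ n : ℕ, ‖y ^ n‖ ≤ M ^ n := by
  intro n
  induction n with
  | zero => simpa using h1
  | succ n ih =>
    calc ‖y ^ (n+1)‖ = ‖y * y ^ n‖ := by rw [pow_succ']
      _ ≤ ‖y‖ * ‖y ^ n‖ := norm_mul_le _ _
      _ ≤ M * M ^ n := mul_le_mul hy ih (norm_nonneg _) hM
      _ = M ^ (n+1) := (pow_succ' M n).symm

omit [NormedAlgebra ℝ ℬ] [CompleteSpace ℬ] in
lemma slt_pow_sub_pow (h1 : ‖(1:ℬ)‖ ≤ 1) {x y : ℬ} {M : ℝ} (hx : ‖x‖ ≤ M) (hy : ‖y‖ ≤ M)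
    (hM : 1 ≤ M) : ∀ n : ℕ, ‖x ^ n - y ^ n‖ ≤ n * M ^ n * ‖x - y‖ := by
  have hM0 : (0:ℝ) ≤ M := zero_le_one.trans hM
  intro n
  induction n with
  | zero => simp
  | succ n ih =>
    have key : x ^ (n+1) - y ^ (n+1) = x * (x ^ n - y ^ n) + (x - y) * y ^ n := by
      rw [pow_succ', pow_succ']; noncomm_ring
    have hpow : M ^ n ≤ M ^ (n+1) := pow_le_pow_right₀ hM (Nat.le_succ n)
    calc ‖x ^ (n+1) - y ^ (n+1)‖ ≤ ‖x * (x ^ n - y ^ n)‖ + ‖(x - y) * y ^ n‖ := by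
          rw [key]; exact norm_add_le _ _
      _ ≤ ‖x‖ * ‖x ^ n - y ^ n‖ + ‖x - y‖ * ‖y ^ n‖ :=
          add_le_add (norm_mul_le _ _) (norm_mul_le _ _)
      _ ≤ M * (n * M ^ n * ‖x - y‖) + ‖x - y‖ * M ^ n :=
          add_le_add (mul_le_mul hx ih (norm_nonneg _) hM0)
            (mul_le_mul_of_nonneg_left (slt_norm_pow_le h1 hy hM0 n) (norm_nonneg _))
      _ = ↑n * M ^ (n+1) * ‖x - y‖ + ‖x - y‖ * M ^ n := by rw [pow_succ']; ring
      _ ≤ ↑n * M ^ (n+1) * ‖x - y‖ + ‖x - y‖ * M ^ (n+1) :=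
          add_le_add_right (mul_le_mul_of_nonneg_left hpow (norm_nonneg _)) _
      _ = (↑(n+1) : ℝ) * M ^ (n+1) * ‖x - y‖ := by push_cast; ring
end aux
set_option maxHeartbeats 1600000 in
lemma slt_main {ℬ : Type*} [NormedRing ℬ] [NormedAlgebra ℝ ℬ] [CompleteSpace ℬ]
    (h1 : ‖(1:ℬ)‖ ≤ 1) (A B : ℬ) :
    Tendsto
      (fun n : ℕ =>
        (exp ((2 * (n : ℝ))⁻¹ • B) * exp ((n : ℝ)⁻¹ • A) *
            exp ((2 * (n : ℝ))⁻¹ • B)) ^ n)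
      atTop (nhds (exp (A + B))) := by
  set K : ℝ := ‖A‖ + ‖B‖ + 1 with hK_def
  have hK1 : (1:ℝ) ≤ K := by
    have := norm_nonneg A; have := norm_nonneg B; simp only [hK_def]; linarith
  have hK0 : (0:ℝ) < K := by linarith
  have hA : ‖A‖ ≤ K := by have := norm_nonneg B; simp only [hK_def]; linarith
  have hB : ‖B‖ ≤ K := by have := norm_nonneg A; simp only [hK_def]; linarith
  have hAB : ‖A + B‖ ≤ K := by
    have := norm_add_le A B; simp only [hK_def]; linarith
  set eK : ℝ := Real.exp K with heK_def
  have heK1 : (1:ℝ) ≤ eK := Real.one_le_exp hK0.le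
  set C : ℝ := Real.exp (3*K) * (K^2 * (4*eK + 3*eK^2 + K*eK^3)) with hC_def
  rw [tendsto_iff_norm_sub_tendsto_zero]
  apply squeeze_zero' (Eventually.of_forall fun n => norm_nonneg _) ?_
    (tendsto_const_div_atTop_nhds_zero_nat C)
  filter_upwards [eventually_ge_atTop 1] with n hn
  have hn0 : (0:ℝ) < n := by exact_mod_cast hn
  have hn1 : (1:ℝ) ≤ n := by exact_mod_cast hn
  set a : ℬ := (n : ℝ)⁻¹ • A with ha_def
  set b : ℬ := (2 * (n : ℝ))⁻¹ • B with hb_def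
  have hs_val : (n:ℝ)⁻¹ • (A + B) = a + b + b := by
    have h2 : ((2*(n:ℝ))⁻¹ + (2*(n:ℝ))⁻¹) = (n:ℝ)⁻¹ := by
      rw [← two_mul, mul_inv, ← mul_assoc, mul_inv_cancel₀ (two_ne_zero), one_mul]
    rw [ha_def, hb_def, ← h2]
    simp only [add_smul, smul_add]
    abel
  set t : ℝ := K / n with ht_def
  have ht0 : 0 < t := by positivity
  have htK : t ≤ K := by
    rw [ht_def, div_le_iff₀ hn0]; nlinarith
  have hna : ‖a‖ ≤ t := by
    rw [ha_def, norm_smul, norm_inv, Real.norm_natCast, inv_mul_eq_div, ht_def,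
      div_le_div_iff₀ hn0 hn0]
    nlinarith
  have hnb : ‖b‖ ≤ t := by
    rw [hb_def, norm_smul, norm_inv, Real.norm_of_nonneg (by positivity), inv_mul_eq_div,
      ht_def, div_le_div_iff₀ (by positivity) hn0]
    nlinarith [norm_nonneg B]
  have hns : ‖a + b + b‖ ≤ t := by
    rw [← hs_val, norm_smul, norm_inv, Real.norm_natCast, inv_mul_eq_div, ht_def,
      div_le_div_iff₀ hn0 hn0]
    nlinarith
  -- generic exponential estimates
  have hE1 : ∀ z : ℬ, ‖z‖ ≤ t → ‖exp z - 1‖ ≤ t * eK := by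
    intro z hz
    refine (slt_norm_exp_sub_one_le z).trans ?_
    exact mul_le_mul hz (Real.exp_le_exp.2 (hz.trans htK)) (Real.exp_nonneg _) ht0.le
  have hE2 : ∀ z : ℬ, ‖z‖ ≤ t → ‖exp z - 1 - z‖ ≤ t^2 * eK := by
    intro z hz
    refine (slt_norm_exp_sub_one_sub_le z).trans ?_
    exact mul_le_mul (pow_le_pow_left₀ (norm_nonneg z) hz 2)
      (Real.exp_le_exp.2 (hz.trans htK)) (Real.exp_nonneg _) (by positivity)
  set x : ℬ := exp b * exp a * exp b with hx_def
  set y : ℬ := exp (a + b + b) with hy_def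
  have hyn : y ^ n = exp (A + B) := by
    let +nondep : NormedAlgebra ℚ ℬ := .restrictScalars ℚ ℝ ℬ
    rw [hy_def, ← exp_nsmul]
    congr 1
    rw [← hs_val, ← Nat.cast_smul_eq_nsmul ℝ, smul_smul, mul_inv_cancel₀ hn0.ne', one_smul]
  have hxy : x - y = (((exp b - 1 - b) + (exp b - 1 - b) + (exp a - 1 - a))
      + ((exp b - 1) * (exp a - 1) + (exp a - 1) * (exp b - 1)
        + (exp b - 1) * (exp b - 1) + (exp b - 1) * (exp a - 1) * (exp b - 1)))
      - (exp (a + b + b) - 1 - (a + b + b)) := by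
    rw [hx_def, hy_def]; noncomm_ring
  have hu : ‖exp b - 1‖ ≤ t * eK := hE1 b hnb
  have hv : ‖exp a - 1‖ ≤ t * eK := hE1 a hna
  have hteK : (0:ℝ) ≤ t * eK := by positivity
  have n1 : ‖(exp b - 1) * (exp a - 1)‖ ≤ (t*eK)*(t*eK) :=
    (norm_mul_le _ _).trans (mul_le_mul hu hv (norm_nonneg _) hteK)
  have n2 : ‖(exp a - 1) * (exp b - 1)‖ ≤ (t*eK)*(t*eK) :=
    (norm_mul_le _ _).trans (mul_le_mul hv hu (norm_nonneg _) hteK)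
  have n3 : ‖(exp b - 1) * (exp b - 1)‖ ≤ (t*eK)*(t*eK) :=
    (norm_mul_le _ _).trans (mul_le_mul hu hu (norm_nonneg _) hteK)
  have n4 : ‖(exp b - 1) * (exp a - 1) * (exp b - 1)‖ ≤ ((t*eK)*(t*eK))*(t*eK) :=
    (norm_mul_le _ _).trans (mul_le_mul n1 hu (norm_nonneg _) (by positivity))
  have hxy_norm : ‖x - y‖ ≤ t^2 * (4*eK + 3*eK^2 + K*eK^3) := by
    have hb1 : ‖(exp b - 1 - b) + (exp b - 1 - b) + (exp a - 1 - a)‖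
        ≤ t^2*eK + t^2*eK + t^2*eK :=
      norm_add₃_le.trans (add_le_add (add_le_add (hE2 b hnb) (hE2 b hnb)) (hE2 a hna))
    have hb2 : ‖(exp b - 1) * (exp a - 1) + (exp a - 1) * (exp b - 1)
        + (exp b - 1) * (exp b - 1) + (exp b - 1) * (exp a - 1) * (exp b - 1)‖
        ≤ ((t*eK)*(t*eK) + (t*eK)*(t*eK) + (t*eK)*(t*eK)) + ((t*eK)*(t*eK))*(t*eK) :=
      (norm_add_le _ _).trans (add_le_add
        (norm_add₃_le.trans (add_le_add (add_le_add n1 n2) n3)) n4)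
    have htot : ‖x - y‖ ≤ ((t^2*eK + t^2*eK + t^2*eK)
        + (((t*eK)*(t*eK) + (t*eK)*(t*eK) + (t*eK)*(t*eK)) + ((t*eK)*(t*eK))*(t*eK)))
        + t^2*eK := by
      rw [hxy]
      exact (norm_sub_le _ _).trans (add_le_add
        ((norm_add_le _ _).trans (add_le_add hb1 hb2)) (hE2 (a + b + b) hns))
    refine htot.trans ?_
    have ht3 : t^3 * eK^3 ≤ K * (t^2 * eK^3) := by
      have h := mul_le_mul_of_nonneg_right htK (show (0:ℝ) ≤ t^2 * eK^3 by positivity)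
      calc t^3*eK^3 = t * (t^2 * eK^3) := by ring
        _ ≤ K * (t^2 * eK^3) := h
    nlinarith [ht3]
  -- bounds on ‖x‖, ‖y‖
  have hxM : ‖x‖ ≤ Real.exp (3*t) := by
    rw [hx_def]
    calc ‖exp b * exp a * exp b‖ ≤ ‖exp b‖ * ‖exp a‖ * ‖exp b‖ :=
          (norm_mul_le _ _).trans (mul_le_mul_of_nonneg_right (norm_mul_le _ _) (norm_nonneg _))
      _ ≤ Real.exp ‖b‖ * Real.exp ‖a‖ * Real.exp ‖b‖ := by
          refine mul_le_mul (mul_le_mul (slt_norm_exp_le h1 b) (slt_norm_exp_le h1 a)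
            (norm_nonneg _) (Real.exp_nonneg _)) (slt_norm_exp_le h1 b) (norm_nonneg _) ?_
          positivity
      _ = Real.exp (‖b‖ + ‖a‖ + ‖b‖) := by rw [Real.exp_add, Real.exp_add]
      _ ≤ Real.exp (3*t) := Real.exp_le_exp.2 (by linarith)
  have hyM : ‖y‖ ≤ Real.exp (3*t) := by
    rw [hy_def]
    refine (slt_norm_exp_le h1 _).trans (Real.exp_le_exp.2 ?_)
    linarith
  have hM1 : (1:ℝ) ≤ Real.exp (3*t) := Real.one_le_exp (by positivity)
  have tel := slt_pow_sub_pow h1 hxM hyM hM1 n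
  have hMn : (Real.exp (3*t))^n = Real.exp (3*K) := by
    rw [← Real.exp_nat_mul]
    congr 1
    rw [ht_def]
    field_simp
  rw [← hyn]
  calc ‖x ^ n - y ^ n‖ ≤ n * (Real.exp (3*t))^n * ‖x - y‖ := tel
    _ ≤ n * Real.exp (3*K) * (t^2 * (4*eK + 3*eK^2 + K*eK^3)) := by
        rw [hMn]
        exact mul_le_mul_of_nonneg_left hxy_norm (by positivity)
    _ = C / n := by
        rw [hC_def, ht_def]
        field_simp
theorem symmetrized_lie_trotter {𝒜 : Type*} [NormedRing 𝒜] [NormedAlgebra ℝ 𝒜]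
    [CompleteSpace 𝒜] (A B : 𝒜) :
    Filter.Tendsto
      (fun n : ℕ =>
        (NormedSpace.exp ((2 * (n : ℝ))⁻¹ • B) * NormedSpace.exp ((n : ℝ)⁻¹ • A) *
            NormedSpace.exp ((2 * (n : ℝ))⁻¹ • B)) ^ n)
      Filter.atTop (nhds (NormedSpace.exp (A + B))) := by
  set φ : 𝒜 →+* (𝒜 →L[ℝ] 𝒜) :=
    { toFun := fun z => ContinuousLinearMap.mul ℝ 𝒜 z
      map_one' := by ext z; simp [ContinuousLinearMap.mul_apply']
      map_mul' := fun u v => by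
        ext z
        simp [ContinuousLinearMap.mul_apply', mul_assoc]
      map_zero' := by ext z; simp [ContinuousLinearMap.mul_apply']
      map_add' := fun u v => by
        ext z
        simp [ContinuousLinearMap.mul_apply', add_mul] } with hφ_def
  have hφc : Continuous φ := (ContinuousLinearMap.mul ℝ 𝒜).continuous
  have hφs : ∀ (c : ℝ) (z : 𝒜), φ (c • z) = c • φ z := fun c z =>
    (ContinuousLinearMap.mul ℝ 𝒜).map_smul c z
  have h1 : ‖(1 : 𝒜 →L[ℝ] 𝒜)‖ ≤ 1 := by
    rw [ContinuousLinearMap.one_def]; exact ContinuousLinearMap.norm_id_le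
  have key := slt_main h1 (φ A) (φ B)
  have hmap : ∀ n : ℕ,
      φ ((exp ((2 * (n:ℝ))⁻¹ • B) * exp ((n:ℝ)⁻¹ • A) * exp ((2 * (n:ℝ))⁻¹ • B)) ^ n)
        = (exp ((2 * (n:ℝ))⁻¹ • φ B) * exp ((n:ℝ)⁻¹ • φ A) *
            exp ((2 * (n:ℝ))⁻¹ • φ B)) ^ n := by
    intro n
    let +nondep : NormedAlgebra ℚ 𝒜 := .restrictScalars ℚ ℝ 𝒜
    let +nondep : NormedAlgebra ℚ (𝒜 →L[ℝ] 𝒜) := .restrictScalars ℚ ℝ (𝒜 →L[ℝ] 𝒜)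
    rw [map_pow, map_mul, map_mul, map_exp φ hφc, map_exp φ hφc]
    simp only [hφs]
  have key2 : Tendsto
      (fun n : ℕ =>
        φ ((exp ((2 * (n:ℝ))⁻¹ • B) * exp ((n:ℝ)⁻¹ • A) *
            exp ((2 * (n:ℝ))⁻¹ • B)) ^ n))
      atTop (nhds (φ (exp (A + B)))) := by
    let +nondep : NormedAlgebra ℚ 𝒜 := .restrictScalars ℚ ℝ 𝒜
    let +nondep : NormedAlgebra ℚ (𝒜 →L[ℝ] 𝒜) := .restrictScalars ℚ ℝ (𝒜 →L[ℝ] 𝒜)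
    rw [map_exp φ hφc, map_add]
    simpa only [hmap] using key
  have hlow : ∀ z : 𝒜, ‖z‖ ≤ ‖(1:𝒜)‖ * ‖φ z‖ := by
    intro z
    have hz : ‖φ z 1‖ ≤ ‖φ z‖ * ‖(1:𝒜)‖ := (φ z).le_opNorm 1
    have he : φ z 1 = z := by
      simp [hφ_def, ContinuousLinearMap.mul_apply']
    rw [he] at hz
    linarith [hz]
  rw [tendsto_iff_norm_sub_tendsto_zero]
  have key3 : Tendsto (fun n : ℕ => ‖(1:𝒜)‖ *
      ‖φ ((exp ((2 * (n:ℝ))⁻¹ • B) * exp ((n:ℝ)⁻¹ • A) *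
          exp ((2 * (n:ℝ))⁻¹ • B)) ^ n) - φ (exp (A + B))‖) atTop (nhds 0) := by
    have h := tendsto_iff_norm_sub_tendsto_zero.mp key2
    have := h.const_mul ‖(1:𝒜)‖
    simpa using this
  refine squeeze_zero' (Eventually.of_forall fun n => norm_nonneg _)
    (Eventually.of_forall fun n => ?_) key3
  calc ‖(exp ((2 * (n:ℝ))⁻¹ • B) * exp ((n:ℝ)⁻¹ • A) *
          exp ((2 * (n:ℝ))⁻¹ • B)) ^ n - exp (A + B)‖
      ≤ ‖(1:𝒜)‖ * ‖φ ((exp ((2 * (n:ℝ))⁻¹ • B) * exp ((n:ℝ)⁻¹ • A) *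
          exp ((2 * (n:ℝ))⁻¹ • B)) ^ n - exp (A + B))‖ := hlow _
    _ = ‖(1:𝒜)‖ * ‖φ ((exp ((2 * (n:ℝ))⁻¹ • B) * exp ((n:ℝ)⁻¹ • A) *
          exp ((2 * (n:ℝ))⁻¹ • B)) ^ n) - φ (exp (A + B))‖ := by rw [map_sub]
end

section
/- For elements A, B in a Banach algebra and every positive integer n, ‖exp(A+B) − (exp(B/(2n)) exp(A/n) exp(B/(2n)))^n‖ ≤ (1/(3n²)) · (‖A‖+‖B‖)³ · exp(‖A‖+‖B‖). -/
open NormedSpace Finset Nat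

section Aux

lemma tailSummable (t : ℝ) (j : ℕ) : Summable (fun k : ℕ => t^(k+j)/((k+j)! : ℝ)) :=
  (summable_nat_add_iff j).2 (Real.summable_pow_div_factorial t)

lemma realTail (t : ℝ) (j : ℕ) :
    ∑' k : ℕ, t^(k+j)/((k+j)! : ℝ) = Real.exp t - ∑ i ∈ range j, t^i/(i ! : ℝ) := by
  have h := Real.summable_pow_div_factorial t
  have h2 := Summable.sum_add_tsum_nat_add (f := fun n => t^n/(n ! : ℝ)) j h
  have he : Real.exp t = ∑' n : ℕ, t^n/(n ! : ℝ) := by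
    rw [Real.exp_eq_exp_ℝ, exp_eq_tsum_div]
  rw [he, ← h2]; ring

lemma realTail_nonneg (t : ℝ) (ht : 0 ≤ t) (j : ℕ) : 0 ≤ ∑' k : ℕ, t^(k+j)/((k+j)! : ℝ) :=
  tsum_nonneg fun k => by positivity

lemma tail3_le {t : ℝ} (ht : 0 ≤ t) :
    ∑' k : ℕ, t^(k+3)/((k+3)! : ℝ) ≤ t^3/6 * Real.exp t := by
  have hb : ∀ k : ℕ, t^(k+3)/((k+3)! : ℝ) ≤ t^3/6 * (t^k/(k ! : ℝ)) := by
    intro k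
    have h6 : (6 : ℝ) * (k ! : ℝ) ≤ ((k+3)! : ℝ) := by
      have hh : 6 * k ! ≤ (k+3)! := by
        have h1 : (k+3)! = (k+3)*((k+2)*((k+1)*k !)) := rfl
        have h2 : 6 * k ! = 3*(2*(1*k !)) := by ring
        rw [h1, h2]
        gcongr <;> omega
      exact_mod_cast hh
    calc t^(k+3)/((k+3)! : ℝ) ≤ t^(k+3)/(6*(k ! : ℝ)) := by gcongr
      _ = t^3/6 * (t^k/(k ! : ℝ)) := by
          rw [pow_add]; field_simp
  have hsum2 : Summable (fun k : ℕ => t^3/6 * (t^k/(k ! : ℝ))) :=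
    (Real.summable_pow_div_factorial t).mul_left _
  have h := Summable.tsum_le_tsum hb ((summable_nat_add_iff 3).2 (Real.summable_pow_div_factorial t)) hsum2
  refine h.trans ?_
  rw [tsum_mul_left]
  have he : ∑' n : ℕ, t^n/(n ! : ℝ) = Real.exp t := by
    rw [Real.exp_eq_exp_ℝ, exp_eq_tsum_div]
  rw [he]

lemma sum_range_three (t : ℝ) : ∑ i ∈ range 3, t^i/(i ! : ℝ) = 1 + t + t^2/2 := by
  norm_num [Finset.sum_range_succ]

variable {𝒜 : Type*} [NormedRing 𝒜]

lemma peel_right {y : 𝒜} {c : ℝ} (z : 𝒜) (hy : ‖y - 1‖ ≤ c) :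
    ‖z * y‖ ≤ ‖z‖ * (1 + c) := by
  have h : z * y = z + z * (y - 1) := by noncomm_ring
  rw [h]
  calc ‖z + z * (y-1)‖ ≤ ‖z‖ + ‖z‖ * ‖y - 1‖ :=
        (norm_add_le _ _).trans (by gcongr; exact norm_mul_le _ _)
    _ ≤ ‖z‖ * (1 + c) := by nlinarith [norm_nonneg z, (norm_nonneg (y-1)).trans hy]

lemma peel_left {y : 𝒜} {c : ℝ} (z : 𝒜) (hy : ‖y - 1‖ ≤ c) :
    ‖y * z‖ ≤ (1 + c) * ‖z‖ := by
  have h : y * z = z + (y - 1) * z := by noncomm_ring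
  rw [h]
  calc ‖z + (y-1) * z‖ ≤ ‖z‖ + ‖y - 1‖ * ‖z‖ :=
        (norm_add_le _ _).trans (by gcongr; exact norm_mul_le _ _)
    _ ≤ (1 + c) * ‖z‖ := by nlinarith [norm_nonneg z, (norm_nonneg (y-1)).trans hy]

lemma mul_sub_one_bound {x y : 𝒜} {a b : ℝ}
    (hx : ‖x - 1‖ ≤ a) (hy : ‖y - 1‖ ≤ b) : ‖x * y - 1‖ ≤ a * b + a + b := by
  have h : x * y - 1 = (x - 1) * (y - 1) + (x - 1) + (y - 1) := by noncomm_ring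
  rw [h]
  have h0a : (0:ℝ) ≤ a := (norm_nonneg _).trans hx
  have h0b : (0:ℝ) ≤ b := (norm_nonneg _).trans hy
  calc ‖(x-1)*(y-1) + (x-1) + (y-1)‖ ≤ ‖(x-1)*(y-1)‖ + ‖x-1‖ + ‖y-1‖ := by
        refine (norm_add_le _ _).trans ?_
        gcongr
        exact norm_add_le _ _
    _ ≤ a*b + a + b := by
        have h2 : ‖x-1‖*‖y-1‖ ≤ a*b := mul_le_mul hx hy (norm_nonneg _) h0a
        have := norm_mul_le (x-1) (y-1)
        linarith

lemma pow_sub_one_bound {x : 𝒜} {α : ℝ} (hα : 1 ≤ α)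
    (hx : ‖x - 1‖ ≤ α - 1) : ∀ k : ℕ, ‖x^k - 1‖ ≤ α^k - 1 := by
  intro k
  induction k with
  | zero => simp
  | succ k ih =>
      have h := mul_sub_one_bound (𝒜 := 𝒜) ih hx
      rw [pow_succ, pow_succ]
      refine h.trans ?_
      have hαk : (1:ℝ) ≤ α^k := one_le_pow₀ hα
      nlinarith

lemma telescope {x y : 𝒜} {α d : ℝ} (hα : 1 ≤ α)
    (hx : ‖x - 1‖ ≤ α - 1) (hy : ‖y - 1‖ ≤ α - 1) (hd : ‖x - y‖ ≤ d) :
    ∀ k : ℕ, ‖x^(k+1) - y^(k+1)‖ ≤ (k+1) * α^k * d := by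
  have hd0 : 0 ≤ d := (norm_nonneg _).trans hd
  intro k
  induction k with
  | zero => simpa using hd
  | succ k ih =>
      have key0 : ∀ p q : 𝒜, p * x - q * y = p * (x - y) + (p - q) * y := by
        intro p q; noncomm_ring
      have key : x^(k+1)*x - y^(k+1)*y = x^(k+1) * (x - y) + (x^(k+1) - y^(k+1)) * y :=
        key0 _ _
      rw [show k+2 = k+1+1 from rfl, pow_succ x (k+1), pow_succ y (k+1), key]
      have h1 : ‖x^(k+1) * (x - y)‖ ≤ α^(k+1) * d := by
        have := peel_left (𝒜 := 𝒜) (x - y) (pow_sub_one_bound hα hx (k+1))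
        refine this.trans ?_
        have he : (1 + (α^(k+1) - 1)) = α^(k+1) := by ring
        rw [he]
        exact mul_le_mul_of_nonneg_left hd (by positivity)
      have h2 : ‖(x^(k+1) - y^(k+1)) * y‖ ≤ (k+1) * α^(k+1) * d := by
        have := peel_right (𝒜 := 𝒜) (x^(k+1) - y^(k+1)) hy
        refine this.trans ?_
        have he : (1 + (α - 1)) = α := by ring
        rw [he]
        calc ‖x^(k+1) - y^(k+1)‖ * α ≤ ((k+1) * α^k * d) * α :=
              mul_le_mul_of_nonneg_right ih (by linarith)
          _ = (k+1) * α^(k+1) * d := by ring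
      refine (norm_add_le _ _).trans ?_
      refine (add_le_add h1 h2).trans ?_
      have hαk : (0:ℝ) ≤ α^(k+1) := by positivity
      push_cast
      nlinarith

lemma nm3 (p q r : 𝒜) : ‖p*(q*r)‖ ≤ ‖p‖*(‖q‖*‖r‖) :=
  (norm_mul_le _ _).trans (mul_le_mul_of_nonneg_left (norm_mul_le _ _) (norm_nonneg _))

lemma nm4 (p q r s : 𝒜) : ‖p*(q*(r*s))‖ ≤ ‖p‖*(‖q‖*(‖r‖*‖s‖)) :=
  (norm_mul_le _ _).trans (mul_le_mul_of_nonneg_left (nm3 _ _ _) (norm_nonneg _))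

lemma nm5 (p q r s w : 𝒜) : ‖p*(q*(r*(s*w)))‖ ≤ ‖p‖*(‖q‖*(‖r‖*(‖s‖*‖w‖))) :=
  (norm_mul_le _ _).trans (mul_le_mul_of_nonneg_left (nm4 _ _ _ _) (norm_nonneg _))

lemma nm6 (p q r s w v : 𝒜) : ‖p*(q*(r*(s*(w*v))))‖ ≤ ‖p‖*(‖q‖*(‖r‖*(‖s‖*(‖w‖*‖v‖)))) :=
  (norm_mul_le _ _).trans (mul_le_mul_of_nonneg_left (nm5 _ _ _ _ _) (norm_nonneg _))

end Aux

section Main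

variable {𝒜 : Type*} [NormedRing 𝒜] [NormedAlgebra ℝ 𝒜] [CompleteSpace 𝒜]

lemma norm_exp_sub_partial (Z : 𝒜) {j : ℕ} (hj : 1 ≤ j) {t : ℝ} (ht : ‖Z‖ ≤ t) :
    ‖exp Z - ∑ i ∈ range j, ((i ! : ℝ)⁻¹) • Z^i‖ ≤ ∑' k : ℕ, t^(k+j)/((k+j)! : ℝ) := by
  have ht0 : 0 ≤ t := le_trans (norm_nonneg _) ht
  have hs : Summable (fun i : ℕ => ((i ! : ℝ)⁻¹) • Z^i) := expSeries_summable' Z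
  have h2 := Summable.sum_add_tsum_nat_add (f := fun i => ((i ! : ℝ)⁻¹) • Z^i) j hs
  rw [exp_eq_tsum ℝ]; simp only []
  rw [← h2, add_sub_cancel_left]
  have hb : ∀ k : ℕ, ‖(((k+j)! : ℝ)⁻¹) • Z^(k+j)‖ ≤ t^(k+j)/((k+j)! : ℝ) := by
    intro k
    rw [norm_smul, norm_inv, Real.norm_natCast]
    have h1 : ‖Z^(k+j)‖ ≤ t^(k+j) :=
      le_trans (norm_pow_le' Z (by omega)) (pow_le_pow_left₀ (norm_nonneg _) ht _)
    rw [div_eq_inv_mul]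
    exact mul_le_mul_of_nonneg_left h1 (by positivity)
  have hsn : Summable (fun k : ℕ => ‖(((k+j)! : ℝ)⁻¹) • Z^(k+j)‖) :=
    (summable_nat_add_iff (f := fun i : ℕ => ‖((i ! : ℝ)⁻¹) • Z^i‖) j).2 (norm_expSeries_summable' Z)
  refine le_trans (norm_tsum_le_tsum_norm hsn) ?_
  exact Summable.tsum_le_tsum hb hsn (tailSummable t j)

lemma norm_exp_sub_one (Z : 𝒜) {t : ℝ} (ht : ‖Z‖ ≤ t) :
    ‖exp Z - 1‖ ≤ Real.exp t - 1 := by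
  have h := norm_exp_sub_partial Z (j := 1) le_rfl ht
  simp only [Finset.sum_range_one, pow_zero, Nat.factorial_zero, Nat.cast_one, inv_one,
    one_smul] at h
  rw [realTail] at h
  simpa using h

lemma norm_exp_sub_quad (Z : 𝒜) {t : ℝ} (ht : ‖Z‖ ≤ t) :
    ‖exp Z - (1 + Z + (2:ℝ)⁻¹ • (Z*Z))‖ ≤ Real.exp t - (1 + t + t^2/2) := by
  have h := norm_exp_sub_partial Z (j := 3) (by norm_num) ht
  have hsum : ∑ i ∈ range 3, ((i ! : ℝ)⁻¹) • Z^i = 1 + Z + (2:ℝ)⁻¹ • (Z*Z) := by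
    rw [Finset.sum_range_succ, Finset.sum_range_succ, Finset.sum_range_one]
    norm_num [pow_two]
  rw [hsum, realTail, sum_range_three] at h
  exact h

set_option maxHeartbeats 1000000 in
lemma key_identity (u X : 𝒜) :
    (1 + u + (2:ℝ)⁻¹•(u*u)) * (1 + X + (2:ℝ)⁻¹•(X*X)) * (1 + u + (2:ℝ)⁻¹•(u*u))
      - (1 + (X + (2:ℝ)•u) + (2:ℝ)⁻¹•((X + (2:ℝ)•u)*(X + (2:ℝ)•u)))
    = u*(X*u) + (2:ℝ)⁻¹•(u*(X*X)) + (2:ℝ)⁻¹•(X*(X*u)) + (2:ℝ)⁻¹•(u*(u*X)) + (2:ℝ)⁻¹•(X*(u*u))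
      + (2:ℝ)⁻¹•(u*(u*u)) + (2:ℝ)⁻¹•(u*(u*u))
      + (4:ℝ)⁻¹•(u*(u*(X*X))) + (4:ℝ)⁻¹•(X*(X*(u*u))) + (4:ℝ)⁻¹•(u*(u*(u*u)))
      + (2:ℝ)⁻¹•(u*(X*(X*u))) + (2:ℝ)⁻¹•(u*(u*(X*u))) + (2:ℝ)⁻¹•(u*(X*(u*u)))
      + (4:ℝ)⁻¹•(u*(u*(X*(X*u)))) + (4:ℝ)⁻¹•(u*(X*(X*(u*u)))) + (4:ℝ)⁻¹•(u*(u*(X*(u*u))))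
      + (8:ℝ)⁻¹•(u*(u*(X*(X*(u*u))))) := by
  simp only [mul_add, add_mul, smul_mul_assoc, mul_smul_comm, smul_add, smul_smul,
    mul_one, one_mul, mul_assoc]
  module

set_option maxHeartbeats 2000000 in
lemma quad_poly_bound (u X : 𝒜) {b x : ℝ} (hu : ‖u‖ ≤ b) (hX : ‖X‖ ≤ x) :
    ‖(1 + u + (2:ℝ)⁻¹•(u*u)) * (1 + X + (2:ℝ)⁻¹•(X*X)) * (1 + u + (2:ℝ)⁻¹•(u*u))
      - (1 + (X + (2:ℝ)•u) + (2:ℝ)⁻¹•((X + (2:ℝ)•u)*(X + (2:ℝ)•u)))‖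
    ≤ (1+b+b^2/2)*(1+b+b^2/2)*(1+x+x^2/2) - (1+(x+2*b)+(x+2*b)^2/2) := by
  have hb0 : 0 ≤ b := (norm_nonneg _).trans hu
  have hx0 : 0 ≤ x := (norm_nonneg _).trans hX
  rw [key_identity]
  have H1 : ‖u*(X*u)‖ ≤ b*(x*b) := (nm3 _ _ _).trans (by gcongr)
  have H2 : ‖u*(X*X)‖ ≤ b*(x*x) := (nm3 _ _ _).trans (by gcongr)
  have H3 : ‖X*(X*u)‖ ≤ x*(x*b) := (nm3 _ _ _).trans (by gcongr)
  have H4 : ‖u*(u*X)‖ ≤ b*(b*x) := (nm3 _ _ _).trans (by gcongr)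
  have H5 : ‖X*(u*u)‖ ≤ x*(b*b) := (nm3 _ _ _).trans (by gcongr)
  have H6 : ‖u*(u*u)‖ ≤ b*(b*b) := (nm3 _ _ _).trans (by gcongr)
  have H7 : ‖u*(u*(X*X))‖ ≤ b*(b*(x*x)) := (nm4 _ _ _ _).trans (by gcongr)
  have H8 : ‖X*(X*(u*u))‖ ≤ x*(x*(b*b)) := (nm4 _ _ _ _).trans (by gcongr)
  have H9 : ‖u*(u*(u*u))‖ ≤ b*(b*(b*b)) := (nm4 _ _ _ _).trans (by gcongr)
  have H10 : ‖u*(X*(X*u))‖ ≤ b*(x*(x*b)) := (nm4 _ _ _ _).trans (by gcongr)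
  have H11 : ‖u*(u*(X*u))‖ ≤ b*(b*(x*b)) := (nm4 _ _ _ _).trans (by gcongr)
  have H12 : ‖u*(X*(u*u))‖ ≤ b*(x*(b*b)) := (nm4 _ _ _ _).trans (by gcongr)
  have H13 : ‖u*(u*(X*(X*u)))‖ ≤ b*(b*(x*(x*b))) := (nm5 _ _ _ _ _).trans (by gcongr)
  have H14 : ‖u*(X*(X*(u*u)))‖ ≤ b*(x*(x*(b*b))) := (nm5 _ _ _ _ _).trans (by gcongr)
  have H15 : ‖u*(u*(X*(u*u)))‖ ≤ b*(b*(x*(b*b))) := (nm5 _ _ _ _ _).trans (by gcongr)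
  have H16 : ‖u*(u*(X*(X*(u*u))))‖ ≤ b*(b*(x*(x*(b*b)))) := (nm6 _ _ _ _ _ _).trans (by gcongr)
  have step1 : ‖u*(X*u) + (2:ℝ)⁻¹•(u*(X*X)) + (2:ℝ)⁻¹•(X*(X*u)) + (2:ℝ)⁻¹•(u*(u*X)) + (2:ℝ)⁻¹•(X*(u*u))
      + (2:ℝ)⁻¹•(u*(u*u)) + (2:ℝ)⁻¹•(u*(u*u))
      + (4:ℝ)⁻¹•(u*(u*(X*X))) + (4:ℝ)⁻¹•(X*(X*(u*u))) + (4:ℝ)⁻¹•(u*(u*(u*u)))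
      + (2:ℝ)⁻¹•(u*(X*(X*u))) + (2:ℝ)⁻¹•(u*(u*(X*u))) + (2:ℝ)⁻¹•(u*(X*(u*u)))
      + (4:ℝ)⁻¹•(u*(u*(X*(X*u)))) + (4:ℝ)⁻¹•(u*(X*(X*(u*u)))) + (4:ℝ)⁻¹•(u*(u*(X*(u*u))))
      + (8:ℝ)⁻¹•(u*(u*(X*(X*(u*u)))))‖ ≤
      ‖u*(X*u)‖ + ‖(2:ℝ)⁻¹•(u*(X*X))‖ + ‖(2:ℝ)⁻¹•(X*(X*u))‖ + ‖(2:ℝ)⁻¹•(u*(u*X))‖ + ‖(2:ℝ)⁻¹•(X*(u*u))‖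
      + ‖(2:ℝ)⁻¹•(u*(u*u))‖ + ‖(2:ℝ)⁻¹•(u*(u*u))‖
      + ‖(4:ℝ)⁻¹•(u*(u*(X*X)))‖ + ‖(4:ℝ)⁻¹•(X*(X*(u*u)))‖ + ‖(4:ℝ)⁻¹•(u*(u*(u*u)))‖
      + ‖(2:ℝ)⁻¹•(u*(X*(X*u)))‖ + ‖(2:ℝ)⁻¹•(u*(u*(X*u)))‖ + ‖(2:ℝ)⁻¹•(u*(X*(u*u)))‖
      + ‖(4:ℝ)⁻¹•(u*(u*(X*(X*u))))‖ + ‖(4:ℝ)⁻¹•(u*(X*(X*(u*u))))‖ + ‖(4:ℝ)⁻¹•(u*(u*(X*(u*u))))‖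
      + ‖(8:ℝ)⁻¹•(u*(u*(X*(X*(u*u)))))‖ := by
    iterate 16 refine le_trans (norm_add_le _ _) (add_le_add ?_ le_rfl)
    exact le_rfl
  refine step1.trans ?_
  simp only [norm_smul, Real.norm_eq_abs]
  rw [show |(2:ℝ)⁻¹| = (2:ℝ)⁻¹ by norm_num, show |(4:ℝ)⁻¹| = (4:ℝ)⁻¹ by norm_num,
    show |(8:ℝ)⁻¹| = (8:ℝ)⁻¹ by norm_num]
  nlinarith [H1, H2, H3, H4, H5, H6, H7, H8, H9, H10, H11, H12, H13, H14, H15, H16]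

end Main

set_option maxHeartbeats 2000000 in
theorem suzuki_symmetrized_error {𝒜 : Type*} [NormedRing 𝒜] [NormedAlgebra ℝ 𝒜]
    [CompleteSpace 𝒜] (A B : 𝒜) (n : ℕ) (hn : 1 ≤ n) :
    ‖NormedSpace.exp (A + B) -
        (NormedSpace.exp ((2 * (n : ℝ))⁻¹ • B) * NormedSpace.exp ((n : ℝ)⁻¹ • A) *
            NormedSpace.exp ((2 * (n : ℝ))⁻¹ • B)) ^ n‖ ≤
      1 / (3 * (n : ℝ) ^ 2) * (‖A‖ + ‖B‖) ^ 3 * Real.exp (‖A‖ + ‖B‖) := by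
  have hn0 : (0:ℝ) < (n:ℝ) := by exact_mod_cast Nat.lt_of_lt_of_le Nat.zero_lt_one hn
  have hnne : (n:ℝ) ≠ 0 := ne_of_gt hn0
  set u : 𝒜 := (2*(n:ℝ))⁻¹ • B with hu_def
  set X : 𝒜 := ((n:ℝ))⁻¹ • A with hX_def
  set Z : 𝒜 := X + (2:ℝ) • u with hZ_def
  set b : ℝ := ‖u‖ with hb_def
  set x : ℝ := ‖X‖ with hx_def
  have hb0 : 0 ≤ b := norm_nonneg _
  have hx0 : 0 ≤ x := norm_nonneg _
  set a : ℝ := x + 2*b with ha_def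
  have ha0 : 0 ≤ a := by positivity
  have hx_eq : x = ‖A‖/(n:ℝ) := by
    rw [hx_def, hX_def, norm_smul, norm_inv, Real.norm_natCast, div_eq_inv_mul]
  have hb_eq : b = ‖B‖/(2*(n:ℝ)) := by
    rw [hb_def, hu_def, norm_smul, norm_inv, Real.norm_eq_abs,
      abs_of_pos (by positivity : (0:ℝ) < 2*(n:ℝ)), div_eq_inv_mul]
  have ha_eq : a = (‖A‖+‖B‖)/(n:ℝ) := by
    rw [ha_def, hx_eq, hb_eq]; field_simp
  have h2u : ‖(2:ℝ) • u‖ = 2*b := by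
    rw [norm_smul ((2:ℝ)) u, Real.norm_ofNat, hb_def]
  have hZnorm : ‖Z‖ ≤ a := by
    calc ‖Z‖ = ‖X + (2:ℝ) • u‖ := by rw [hZ_def]
      _ ≤ ‖X‖ + ‖(2:ℝ) • u‖ := norm_add_le _ _
      _ = a := by rw [h2u, ha_def, hx_def]
  set Eu : 𝒜 := exp u with hEu_def
  set Ex : 𝒜 := exp X with hEx_def
  set T : 𝒜 := exp Z with hT_def
  set S : 𝒜 := Eu * Ex * Eu with hS_def
  set Q : 𝒜 := 1 + u + (2:ℝ)⁻¹ • (u*u) with hQ_def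
  set M : 𝒜 := 1 + X + (2:ℝ)⁻¹ • (X*X) with hM_def
  set P : 𝒜 := 1 + Z + (2:ℝ)⁻¹ • (Z*Z) with hP_def
  set eb : ℝ := Real.exp b with heb_def
  set ex : ℝ := Real.exp x with hex_def
  set ea : ℝ := Real.exp a with hea_def
  have hea_mul : ea = ex * (eb * eb) := by
    rw [hea_def, ha_def, show x + 2*b = x + (b + b) by ring, Real.exp_add, Real.exp_add]
  have heb1 : (1:ℝ) ≤ eb := Real.one_le_exp hb0
  have hex1 : (1:ℝ) ≤ ex := Real.one_le_exp hx0
  have hea1 : (1:ℝ) ≤ ea := Real.one_le_exp ha0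
  set q : ℝ := 1 + b + b^2/2 with hq_def
  set m : ℝ := 1 + x + x^2/2 with hm_def
  set pa : ℝ := 1 + a + a^2/2 with hpa_def
  have hq0 : (0:ℝ) < q := by rw [hq_def]; positivity
  have hm0 : (0:ℝ) < m := by rw [hm_def]; positivity
  have hRu : ‖Eu - Q‖ ≤ eb - q := norm_exp_sub_quad u le_rfl
  have hRx : ‖Ex - M‖ ≤ ex - m := norm_exp_sub_quad X le_rfl
  have hTP : ‖T - P‖ ≤ ea - pa := norm_exp_sub_quad Z hZnorm
  have hEu1 : ‖Eu - 1‖ ≤ eb - 1 := norm_exp_sub_one u le_rfl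
  have hEx1 : ‖Ex - 1‖ ≤ ex - 1 := norm_exp_sub_one X le_rfl
  have hT1 : ‖T - 1‖ ≤ ea - 1 := norm_exp_sub_one Z hZnorm
  have hExEu1 : ‖Ex * Eu - 1‖ ≤ ex * eb - 1 :=
    (mul_sub_one_bound hEx1 hEu1).trans (le_of_eq (by ring))
  have hS1 : ‖S - 1‖ ≤ ea - 1 := by
    rw [hS_def, mul_assoc]
    refine (mul_sub_one_bound hEu1 hExEu1).trans ?_
    rw [hea_mul]; nlinarith
  have hQ1 : ‖Q - 1‖ ≤ q - 1 := by
    have h : Q - 1 = u + (2:ℝ)⁻¹ • (u*u) := by rw [hQ_def]; abel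
    have h2 : ‖(2:ℝ)⁻¹ • (u*u)‖ = 2⁻¹ * ‖u*u‖ := by
      rw [norm_smul ((2:ℝ)⁻¹) (u*u)]; norm_num
    rw [h]
    refine (norm_add_le _ _).trans ?_
    rw [h2, hq_def, hb_def]
    nlinarith [norm_mul_le u u, norm_nonneg u]
  have hM1 : ‖M - 1‖ ≤ m - 1 := by
    have h : M - 1 = X + (2:ℝ)⁻¹ • (X*X) := by rw [hM_def]; abel
    have h2 : ‖(2:ℝ)⁻¹ • (X*X)‖ = 2⁻¹ * ‖X*X‖ := by
      rw [norm_smul ((2:ℝ)⁻¹) (X*X)]; norm_num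
    rw [h]
    refine (norm_add_le _ _).trans ?_
    rw [h2, hm_def, hx_def]
    nlinarith [norm_mul_le X X, norm_nonneg X]
  have hdec : S - Q*M*Q = (Eu-Q)*(Ex*Eu) + Q*((Ex-M)*Eu) + Q*M*(Eu-Q) := by
    rw [hS_def]; noncomm_ring
  have ht1 : ‖(Eu-Q)*(Ex*Eu)‖ ≤ (eb-q)*(ex*eb) := by
    refine (peel_right _ hExEu1).trans ?_
    rw [show (1:ℝ)+(ex*eb-1) = ex*eb by ring]
    exact mul_le_mul_of_nonneg_right hRu (by positivity)
  have ht2 : ‖Q*((Ex-M)*Eu)‖ ≤ q*((ex-m)*eb) := by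
    have hinner : ‖(Ex-M)*Eu‖ ≤ (ex-m)*eb := by
      refine (peel_right _ hEu1).trans ?_
      rw [show (1:ℝ)+(eb-1) = eb by ring]
      exact mul_le_mul_of_nonneg_right hRx (by positivity)
    refine (peel_left _ hQ1).trans ?_
    rw [show (1:ℝ)+(q-1) = q by ring]
    exact mul_le_mul_of_nonneg_left hinner (le_of_lt hq0)
  have ht3 : ‖Q*M*(Eu-Q)‖ ≤ (q*m)*(eb-q) := by
    have hQM1 : ‖Q*M - 1‖ ≤ q*m - 1 :=
      (mul_sub_one_bound hQ1 hM1).trans (le_of_eq (by ring))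
    refine (peel_left _ hQM1).trans ?_
    rw [show (1:ℝ)+(q*m-1) = q*m by ring]
    exact mul_le_mul_of_nonneg_left hRu (by positivity)
  have hSQ : ‖S - Q*M*Q‖ ≤ (eb-q)*(ex*eb) + q*((ex-m)*eb) + (q*m)*(eb-q) := by
    rw [hdec]
    refine (norm_add_le _ _).trans ?_
    exact add_le_add ((norm_add_le _ _).trans (add_le_add ht1 ht2)) ht3
  have hQP : ‖Q*M*Q - P‖ ≤ q*q*m - pa := by
    have h := quad_poly_bound (b := b) (x := x) u X le_rfl le_rfl
    rw [hQ_def, hM_def, hP_def, hZ_def, hq_def, hm_def, hpa_def, ha_def]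
    exact h
  have htail : ea - pa ≤ a^3/6 * ea := by
    have h1 := tail3_le ha0
    rw [realTail, sum_range_three] at h1
    rw [hea_def, hpa_def]
    exact h1
  have hTS : ‖T - S‖ ≤ a^3/3 * ea := by
    calc ‖T - S‖ = ‖(T - P) - (Q*M*Q - P) - (S - Q*M*Q)‖ := by
          congr 1; abel
      _ ≤ ‖T - P‖ + ‖Q*M*Q - P‖ + ‖S - Q*M*Q‖ :=
          (norm_sub_le _ _).trans (add_le_add (norm_sub_le _ _) le_rfl)
      _ ≤ (ea-pa) + (q*q*m-pa) + ((eb-q)*(ex*eb) + q*((ex-m)*eb) + (q*m)*(eb-q)) :=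
          add_le_add (add_le_add hTP hQP) hSQ
      _ = 2*(ea-pa) := by rw [hea_mul]; ring
      _ ≤ 2*(a^3/6*ea) := by linarith
      _ = a^3/3*ea := by ring
  have htel := telescope hea1 hT1 hS1 hTS (n-1)
  rw [Nat.sub_add_cancel hn] at htel
  have hexpAB : exp (A+B) = T^n := by
    have hAB : A + B = n • Z := by
      rw [← Nat.cast_smul_eq_nsmul ℝ n Z, hZ_def, hX_def, hu_def]
      match_scalars <;> (field_simp; try ring)
    let +nondep : NormedAlgebra ℚ 𝒜 := .restrictScalars ℚ ℝ 𝒜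
    rw [hT_def, hAB, exp_nsmul]
  rw [hexpAB]
  refine htel.trans (le_of_eq ?_)
  have hc : ((n-1:ℕ):ℝ) + 1 = (n:ℝ) := by
    rw [Nat.cast_sub hn]; push_cast; ring
  have hpow : ea^(n-1) * ea = ea^n := by rw [← pow_succ, Nat.sub_add_cancel hn]
  have hean : ea^n = Real.exp (‖A‖+‖B‖) := by
    rw [hea_def, ← Real.exp_nat_mul, ha_eq]
    congr 1
    field_simp
  calc (((n-1:ℕ):ℝ)+1)*ea^(n-1)*(a^3/3*ea) = (((n-1:ℕ):ℝ)+1)*(ea^(n-1)*ea)*a^3/3 := by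
        ring
    _ = (n:ℝ)*Real.exp (‖A‖+‖B‖)*a^3/3 := by rw [hc, hpow, hean]
    _ = 1/(3*(n:ℝ)^2)*(‖A‖+‖B‖)^3*Real.exp (‖A‖+‖B‖) := by
        rw [ha_eq]; field_simp
end

section
/- For elements A₁, A₂, A₃, A₄, A₅ in a Banach algebra and every positive integer n, ‖exp(Σⱼ₌₁⁵ Aⱼ) − ({exp(A₄/n) {exp(A₂/n) exp(A₁/n) exp(A₃/n)} exp(A₅/n)})^n‖ ≤ (1/(3n²)) · (Σⱼ₌₁⁵ ‖Aⱼ‖)³ · exp(Σⱼ₌₁⁵ ‖Aⱼ‖), where {XYZ} = (XYZ + ZYX)/2 and triple products are nested. -/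
open NormedSpace

section TrotterAux

set_option linter.unusedSectionVars false

variable {𝒜 : Type*} [NormedRing 𝒜] [NormedAlgebra ℝ 𝒜] [CompleteSpace 𝒜]

private lemma real_exp_tail (t : ℝ) (k : ℕ) :
    Real.exp t - ∑ m ∈ Finset.range k, t ^ m / m.factorial
      = ∑' i : ℕ, t ^ (i + k) / (i + k).factorial := by
  have hs : Summable (fun m : ℕ => t ^ m / m.factorial) := Real.summable_pow_div_factorial t
  have h := Summable.sum_add_tsum_nat_add k hs
  have hexp : Real.exp t = ∑' m : ℕ, t ^ m / m.factorial := by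
    rw [Real.exp_eq_exp_ℝ, exp_eq_tsum_div]
  rw [hexp, ← h]; ring

private lemma exp_rem (x : 𝒜) (k : ℕ) (hk : 1 ≤ k) :
    ‖exp x - ∑ m ∈ Finset.range k, ((m.factorial : ℝ))⁻¹ • x ^ m‖ ≤
      Real.exp ‖x‖ - ∑ m ∈ Finset.range k, ‖x‖ ^ m / m.factorial := by
  have hs : Summable (fun m : ℕ => ((m.factorial : ℝ))⁻¹ • x ^ m) := expSeries_summable' x
  have h := Summable.sum_add_tsum_nat_add k hs
  have key : exp x - ∑ m ∈ Finset.range k, ((m.factorial : ℝ))⁻¹ • x ^ m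
      = ∑' i : ℕ, (((i + k).factorial : ℝ))⁻¹ • x ^ (i + k) := by
    rw [exp_eq_tsum (𝕂 := ℝ)]; dsimp only; rw [← h]; abel
  have hsum2 : Summable (fun i : ℕ => ‖x‖ ^ (i + k) / (i + k).factorial) :=
    (summable_nat_add_iff k).2 (Real.summable_pow_div_factorial ‖x‖)
  have hb : ∀ i : ℕ, ‖(((i + k).factorial : ℝ))⁻¹ • x ^ (i + k)‖ ≤
      ‖x‖ ^ (i + k) / (i + k).factorial := by
    intro i
    rw [norm_smul, Real.norm_eq_abs, abs_of_nonneg (by positivity), div_eq_inv_mul]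
    gcongr
    exact norm_pow_le' x (by omega)
  rw [key, real_exp_tail]
  refine (norm_tsum_le_tsum_norm ?_).trans (Summable.tsum_le_tsum hb ?_ hsum2)
  · exact Summable.of_nonneg_of_le (fun i => norm_nonneg _) hb hsum2
  · exact Summable.of_nonneg_of_le (fun i => norm_nonneg _) hb hsum2

private lemma exp_rem1 (x : 𝒜) : ‖exp x - 1‖ ≤ Real.exp ‖x‖ - 1 := by
  have h := exp_rem x 1 le_rfl
  simpa using h

private lemma exp_rem2 (x : 𝒜) : ‖exp x - 1 - x‖ ≤ Real.exp ‖x‖ - 1 - ‖x‖ := by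
  have h := exp_rem x 2 (by norm_num)
  simp [Finset.sum_range_succ] at h
  rw [sub_sub]
  linarith

private lemma exp_rem3 (x : 𝒜) : ‖exp x - (1 + x + (2:ℝ)⁻¹ • (x*x))‖ ≤
    Real.exp ‖x‖ - 1 - ‖x‖ - ‖x‖^2/2 := by
  have h := exp_rem x 3 (by norm_num)
  simp [Finset.sum_range_succ, Nat.factorial] at h
  rw [show (1 : 𝒜) + x + (2:ℝ)⁻¹ • (x*x) = 1 + x + (2:ℝ)⁻¹ • x^2 by rw [← pow_two]]
  linarith

private lemma rho_repr (t : ℝ) :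
    Real.exp t - 1 - t - t^2/2 = ∑' i : ℕ, t^(i+3)/(i+3).factorial := by
  have h := real_exp_tail t 3
  norm_num [Finset.sum_range_succ] at h
  linarith

private lemma summable_tail (t : ℝ) (k : ℕ) :
    Summable (fun i : ℕ => t ^ (i+k) / (i+k).factorial) :=
  (summable_nat_add_iff k).2 (Real.summable_pow_div_factorial t)

private lemma rho_mono {s t : ℝ} (hs : 0 ≤ s) (hst : s ≤ t) :
    Real.exp s - 1 - s - s^2/2 ≤ Real.exp t - 1 - t - t^2/2 := by
  rw [rho_repr, rho_repr]
  refine Summable.tsum_le_tsum (fun i => ?_) (summable_tail s 3) (summable_tail t 3)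
  gcongr

private lemma rho_cube {t : ℝ} (ht : 0 ≤ t) :
    Real.exp t - 1 - t - t^2/2 ≤ t^3/6 * Real.exp t := by
  rw [rho_repr]
  have hb : ∀ i : ℕ, t^(i+3)/(i+3).factorial ≤ t^3/6 * (t^i/i.factorial) := by
    intro i
    have hfacn : 6 * i.factorial ≤ (i+3).factorial := by
      have hd := Nat.factorial_mul_factorial_dvd_factorial_add 3 i
      have := Nat.le_of_dvd (Nat.factorial_pos _) hd
      simpa [Nat.add_comm 3 i, Nat.factorial] using this
    have hfac : (6 * i.factorial : ℝ) ≤ ((i+3).factorial : ℝ) := by exact_mod_cast hfacn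
    have e1 : t^3/6*(t^i/i.factorial) = t^3*t^i/(6*i.factorial) := by ring
    rw [e1, pow_add, mul_comm (t^i) (t^3)]
    gcongr
  refine (Summable.tsum_le_tsum hb (summable_tail t 3)
    ((Real.summable_pow_div_factorial t).mul_left _)).trans ?_
  rw [tsum_mul_left]
  have hexp : Real.exp t = ∑' i : ℕ, t^i/i.factorial := by
    rw [Real.exp_eq_exp_ℝ, exp_eq_tsum_div]
  rw [hexp]

private lemma norm_add_le₃' (a b c : 𝒜) : ‖a+b+c‖ ≤ ‖a‖+‖b‖+‖c‖ := norm_add₃_le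

private lemma norm_add_le₄' (a b c d : 𝒜) : ‖a+b+c+d‖ ≤ ‖a‖+‖b‖+‖c‖+‖d‖ := by
  calc ‖a+b+c+d‖ ≤ ‖a+b+c‖+‖d‖ := norm_add_le _ _
  _ ≤ ‖a‖+‖b‖+‖c‖+‖d‖ := by gcongr; exact norm_add₃_le

private lemma norm_add_le₅' (a b c d e : 𝒜) : ‖a+b+c+d+e‖ ≤ ‖a‖+‖b‖+‖c‖+‖d‖+‖e‖ := by
  calc ‖a+b+c+d+e‖ ≤ ‖a+b+c+d‖+‖e‖ := norm_add_le _ _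
  _ ≤ ‖a‖+‖b‖+‖c‖+‖d‖+‖e‖ := by gcongr; exact norm_add_le₄' a b c d

private lemma norm_add_le₆' (a b c d e f : 𝒜) : ‖a+b+c+d+e+f‖ ≤ ‖a‖+‖b‖+‖c‖+‖d‖+‖e‖+‖f‖ := by
  calc ‖a+b+c+d+e+f‖ ≤ ‖a+b+c+d+e‖+‖f‖ := norm_add_le _ _
  _ ≤ ‖a‖+‖b‖+‖c‖+‖d‖+‖e‖+‖f‖ := by gcongr; exact norm_add_le₅' a b c d e

private lemma expand_step {P L Qd y q : 𝒜} {ω β γ b c : ℝ}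
    (hP : ‖P - (1 + L + Qd)‖ ≤ ω) (hL : ‖L‖ ≤ β) (hQ : ‖Qd‖ ≤ γ)
    (hy : ‖y‖ ≤ b) (hq : ‖q‖ ≤ c) :
    ‖P * (1 + y + q) - (1 + (L + y) + (Qd + q + L * y))‖ ≤
        ω * (1 + b + c) + β * c + γ * b + γ * c ∧
      ‖L + y‖ ≤ β + b ∧ ‖Qd + q + L * y‖ ≤ γ + c + β * b := by
  have h0b : (0:ℝ) ≤ b := (norm_nonneg _).trans hy
  have h0c : (0:ℝ) ≤ c := (norm_nonneg _).trans hq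
  have h0ω : (0:ℝ) ≤ ω := (norm_nonneg _).trans hP
  refine ⟨?_, (norm_add_le _ _).trans (add_le_add hL hy), ?_⟩
  · have key : P * (1 + y + q) - (1 + (L + y) + (Qd + q + L * y)) =
        (P - (1 + L + Qd)) + (P - (1 + L + Qd)) * y + (P - (1 + L + Qd)) * q
          + L * q + Qd * y + Qd * q := by noncomm_ring
    rw [key]
    have t1 : ‖(P - (1 + L + Qd)) * y‖ ≤ ω * b :=
      (norm_mul_le _ _).trans (mul_le_mul hP hy (norm_nonneg _) h0ω)
    have t2 : ‖(P - (1 + L + Qd)) * q‖ ≤ ω * c :=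
      (norm_mul_le _ _).trans (mul_le_mul hP hq (norm_nonneg _) h0ω)
    have t3 : ‖L * q‖ ≤ β * c :=
      (norm_mul_le _ _).trans (mul_le_mul hL hq (norm_nonneg _) ((norm_nonneg _).trans hL))
    have t4 : ‖Qd * y‖ ≤ γ * b :=
      (norm_mul_le _ _).trans (mul_le_mul hQ hy (norm_nonneg _) ((norm_nonneg _).trans hQ))
    have t5 : ‖Qd * q‖ ≤ γ * c :=
      (norm_mul_le _ _).trans (mul_le_mul hQ hq (norm_nonneg _) ((norm_nonneg _).trans hQ))
    calc ‖(P - (1 + L + Qd)) + (P - (1 + L + Qd)) * y + (P - (1 + L + Qd)) * q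
          + L * q + Qd * y + Qd * q‖
        ≤ ‖(P - (1 + L + Qd))‖ + ‖(P - (1 + L + Qd)) * y‖ + ‖(P - (1 + L + Qd)) * q‖
          + ‖L * q‖ + ‖Qd * y‖ + ‖Qd * q‖ := norm_add_le₆' _ _ _ _ _ _
      _ ≤ ω + ω * b + ω * c + β * c + γ * b + γ * c := by gcongr
      _ = ω * (1 + b + c) + β * c + γ * b + γ * c := by ring
  · have t6 : ‖L * y‖ ≤ β * b :=
      (norm_mul_le _ _).trans (mul_le_mul hL hy (norm_nonneg _) ((norm_nonneg _).trans hL))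
    calc ‖Qd + q + L * y‖ ≤ ‖Qd‖ + ‖q‖ + ‖L * y‖ := norm_add₃_le
      _ ≤ γ + c + β * b := by gcongr

private lemma mul_sub_one_exp {P Q : 𝒜} {β b : ℝ} (hβ : 0 ≤ β) (hb : 0 ≤ b)
    (hP : ‖P - 1‖ ≤ Real.exp β - 1) (hQ : ‖Q - 1‖ ≤ Real.exp b - 1) :
    ‖P * Q - 1‖ ≤ Real.exp (β + b) - 1 := by
  have key : P * Q - 1 = (P - 1) * (Q - 1) + (P - 1) + (Q - 1) := by noncomm_ring
  rw [key]
  have h1 : ‖(P - 1) * (Q - 1)‖ ≤ (Real.exp β - 1) * (Real.exp b - 1) :=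
    (norm_mul_le _ _).trans (mul_le_mul hP hQ (norm_nonneg _)
      (by linarith [Real.one_le_exp hβ]))
  calc ‖(P - 1) * (Q - 1) + (P - 1) + (Q - 1)‖
      ≤ ‖(P - 1) * (Q - 1)‖ + ‖P - 1‖ + ‖Q - 1‖ := norm_add₃_le
    _ ≤ (Real.exp β - 1) * (Real.exp b - 1) + (Real.exp β - 1) + (Real.exp b - 1) := by
        gcongr
    _ = Real.exp β * Real.exp b - 1 := by ring
    _ = Real.exp (β + b) - 1 := by rw [Real.exp_add]

private lemma pow_sub_one_le {x : 𝒜} {u : ℝ} (hx : ‖x - 1‖ ≤ u) :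
    ∀ k : ℕ, ‖x ^ k - 1‖ ≤ (1 + u) ^ k - 1 := by
  have h0u : (0:ℝ) ≤ u := (norm_nonneg _).trans hx
  intro k
  induction k with
  | zero => simp
  | succ k ih =>
    have key : x ^ (k+1) - 1 = (x ^ k - 1) * (x - 1) + (x ^ k - 1) + (x - 1) := by
      rw [pow_succ]; noncomm_ring
    rw [key]
    have h1 : ‖(x ^ k - 1) * (x - 1)‖ ≤ ((1+u)^k - 1) * u :=
      (norm_mul_le _ _).trans (mul_le_mul ih hx (norm_nonneg _)
        (by nlinarith [one_le_pow₀ (by linarith : (1:ℝ) ≤ 1 + u) (n := k)]))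
    calc ‖(x ^ k - 1) * (x - 1) + (x ^ k - 1) + (x - 1)‖
        ≤ ‖(x ^ k - 1) * (x - 1)‖ + ‖x ^ k - 1‖ + ‖x - 1‖ := norm_add₃_le
      _ ≤ ((1+u)^k - 1) * u + ((1+u)^k - 1) + u := by gcongr
      _ = (1+u)^(k+1) - 1 := by rw [pow_succ]; ring

private lemma pow_sub_pow_le {E T : 𝒜} {u d : ℝ} (hE : ‖E - 1‖ ≤ u) (hT : ‖T - 1‖ ≤ u)
    (hd : ‖E - T‖ ≤ d) :
    ∀ k : ℕ, ‖E ^ (k+1) - T ^ (k+1)‖ ≤ (k+1) * (1 + u) ^ k * d := by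
  have h0u : (0:ℝ) ≤ u := (norm_nonneg _).trans hE
  have h0d : (0:ℝ) ≤ d := (norm_nonneg _).trans hd
  intro k
  induction k with
  | zero => simpa using hd
  | succ k ih =>
    have key : E ^ (k+2) - T ^ (k+2) =
        (E ^ (k+1) - 1) * (E - T) + (E - T) + (E ^ (k+1) - T ^ (k+1)) * (T - 1)
          + (E ^ (k+1) - T ^ (k+1)) := by
      rw [pow_succ, pow_succ]; noncomm_ring
    rw [key]
    have hpow : (0:ℝ) ≤ (1+u)^k := by positivity
    have hE1 : ‖E ^ (k+1) - 1‖ ≤ (1+u)^(k+1) - 1 := pow_sub_one_le hE (k+1)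
    have h1 : ‖(E ^ (k+1) - 1) * (E - T)‖ ≤ ((1+u)^(k+1) - 1) * d :=
      (norm_mul_le _ _).trans (mul_le_mul hE1 hd (norm_nonneg _)
        (by nlinarith [one_le_pow₀ (by linarith : (1:ℝ) ≤ 1 + u) (n := k+1)]))
    have h2 : ‖(E ^ (k+1) - T ^ (k+1)) * (T - 1)‖ ≤ ((k+1) * (1 + u) ^ k * d) * u :=
      (norm_mul_le _ _).trans (mul_le_mul ih hT (norm_nonneg _) (by positivity))
    calc ‖(E ^ (k+1) - 1) * (E - T) + (E - T) + (E ^ (k+1) - T ^ (k+1)) * (T - 1)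
          + (E ^ (k+1) - T ^ (k+1))‖
        ≤ ‖(E ^ (k+1) - 1) * (E - T)‖ + ‖E - T‖ + ‖(E ^ (k+1) - T ^ (k+1)) * (T - 1)‖
          + ‖E ^ (k+1) - T ^ (k+1)‖ := norm_add_le₄' _ _ _ _
      _ ≤ ((1+u)^(k+1) - 1) * d + d + ((k+1) * (1 + u) ^ k * d) * u
          + (k+1) * (1 + u) ^ k * d := by gcongr
      _ = ((k:ℝ)+1+1) * (1 + u) ^ (k+1) * d := by rw [pow_succ]; ring
      _ = ((k+1:ℕ)+1) * (1 + u) ^ (k+1) * d := by push_cast; ring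

private lemma prod_expand (y₁ y₂ y₃ y₄ y₅ : 𝒜) :
    ‖exp y₁ * exp y₂ * exp y₃ * exp y₄ * exp y₅ -
      (1 + (y₁ + y₂ + y₃ + y₄ + y₅) +
        (((exp y₁ - 1 - y₁) + (exp y₂ - 1 - y₂) + (exp y₃ - 1 - y₃)
            + (exp y₄ - 1 - y₄) + (exp y₅ - 1 - y₅)) +
         (y₁*y₂ + y₁*y₃ + y₁*y₄ + y₁*y₅ + y₂*y₃ + y₂*y₄ + y₂*y₅ + y₃*y₄ + y₃*y₅ + y₄*y₅)))‖ ≤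
      Real.exp (‖y₁‖ + ‖y₂‖ + ‖y₃‖ + ‖y₄‖ + ‖y₅‖) + 4
        - (Real.exp ‖y₁‖ + Real.exp ‖y₂‖ + Real.exp ‖y₃‖ + Real.exp ‖y₄‖ + Real.exp ‖y₅‖)
        - (‖y₁‖*‖y₂‖ + ‖y₁‖*‖y₃‖ + ‖y₁‖*‖y₄‖ + ‖y₁‖*‖y₅‖ + ‖y₂‖*‖y₃‖ + ‖y₂‖*‖y₄‖
            + ‖y₂‖*‖y₅‖ + ‖y₃‖*‖y₄‖ + ‖y₃‖*‖y₅‖ + ‖y₄‖*‖y₅‖) := by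
  have h0 : ‖exp y₁ - (1 + y₁ + (exp y₁ - 1 - y₁))‖ ≤ (0:ℝ) := by
    have e : exp y₁ - (1 + y₁ + (exp y₁ - 1 - y₁)) = 0 := by abel
    rw [e, norm_zero]
  obtain ⟨h1, hL1, hQ1⟩ := expand_step h0 le_rfl (exp_rem2 y₁) le_rfl (exp_rem2 y₂)
  rw [show (1:𝒜) + y₂ + (exp y₂ - 1 - y₂) = exp y₂ from by abel] at h1
  obtain ⟨h2, hL2, hQ2⟩ := expand_step h1 hL1 hQ1 le_rfl (exp_rem2 y₃)
  rw [show (1:𝒜) + y₃ + (exp y₃ - 1 - y₃) = exp y₃ from by abel] at h2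
  obtain ⟨h3, hL3, hQ3⟩ := expand_step h2 hL2 hQ2 le_rfl (exp_rem2 y₄)
  rw [show (1:𝒜) + y₄ + (exp y₄ - 1 - y₄) = exp y₄ from by abel] at h3
  obtain ⟨h4, hL4, hQ4⟩ := expand_step h3 hL3 hQ3 le_rfl (exp_rem2 y₅)
  rw [show (1:𝒜) + y₅ + (exp y₅ - 1 - y₅) = exp y₅ from by abel] at h4
  refine (le_of_eq (congrArg norm ?_)).trans (h4.trans ?_)
  · noncomm_ring
  · rw [show Real.exp (‖y₁‖ + ‖y₂‖ + ‖y₃‖ + ‖y₄‖ + ‖y₅‖)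
        = Real.exp ‖y₁‖ * Real.exp ‖y₂‖ * Real.exp ‖y₃‖ * Real.exp ‖y₄‖ * Real.exp ‖y₅‖ from by
      rw [Real.exp_add, Real.exp_add, Real.exp_add, Real.exp_add]]
    ring_nf
    try rfl

private lemma pair_bound (y₁ y₂ y₃ y₄ y₅ : 𝒜) :
    ‖exp (y₁ + y₂ + y₃ + y₄ + y₅) -
        (2:ℝ)⁻¹ • (exp y₁ * exp y₂ * exp y₃ * exp y₄ * exp y₅
          + exp y₅ * exp y₄ * exp y₃ * exp y₂ * exp y₁)‖ ≤
      2 * (Real.exp (‖y₁‖ + ‖y₂‖ + ‖y₃‖ + ‖y₄‖ + ‖y₅‖) - 1 - (‖y₁‖ + ‖y₂‖ + ‖y₃‖ + ‖y₄‖ + ‖y₅‖)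
        - (‖y₁‖ + ‖y₂‖ + ‖y₃‖ + ‖y₄‖ + ‖y₅‖)^2/2) := by
  have hss : (y₁+y₂+y₃+y₄+y₅) * (y₁+y₂+y₃+y₄+y₅) =
      (y₁*y₁+y₂*y₂+y₃*y₃+y₄*y₄+y₅*y₅)
        + (y₁*y₂+y₂*y₁+y₁*y₃+y₃*y₁+y₁*y₄+y₄*y₁+y₁*y₅+y₅*y₁+y₂*y₃+y₃*y₂+y₂*y₄+y₄*y₂
            +y₂*y₅+y₅*y₂+y₃*y₄+y₄*y₃+y₃*y₅+y₅*y₃+y₄*y₅+y₅*y₄) := by noncomm_ring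
  have hR := exp_rem3 (y₁+y₂+y₃+y₄+y₅)
  rw [hss] at hR
  have h1 := prod_expand y₁ y₂ y₃ y₄ y₅
  have h2 := prod_expand y₅ y₄ y₃ y₂ y₁
  rw [show ‖y₅‖+‖y₄‖+‖y₃‖+‖y₂‖+‖y₁‖ = ‖y₁‖+‖y₂‖+‖y₃‖+‖y₄‖+‖y₅‖ from by ring] at h2
  have hr : ∀ x : 𝒜, ‖(exp x - 1 - x) - (2:ℝ)⁻¹ • (x*x)‖ ≤
      Real.exp ‖x‖ - 1 - ‖x‖ - ‖x‖^2/2 := by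
    intro x
    have e : (exp x - 1 - x) - (2:ℝ)⁻¹ • (x*x) = exp x - (1 + x + (2:ℝ)⁻¹ • (x*x)) := by
      abel
    rw [e]; exact exp_rem3 x
  have hsnorm : ‖y₁+y₂+y₃+y₄+y₅‖ ≤ ‖y₁‖+‖y₂‖+‖y₃‖+‖y₄‖+‖y₅‖ := norm_add_le₅' _ _ _ _ _
  have key : exp (y₁ + y₂ + y₃ + y₄ + y₅) -
        (2:ℝ)⁻¹ • (exp y₁ * exp y₂ * exp y₃ * exp y₄ * exp y₅
          + exp y₅ * exp y₄ * exp y₃ * exp y₂ * exp y₁) =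
      (exp (y₁+y₂+y₃+y₄+y₅) - (1 + (y₁+y₂+y₃+y₄+y₅) + (2:ℝ)⁻¹ •
        ((y₁*y₁+y₂*y₂+y₃*y₃+y₄*y₄+y₅*y₅)
          + (y₁*y₂+y₂*y₁+y₁*y₃+y₃*y₁+y₁*y₄+y₄*y₁+y₁*y₅+y₅*y₁+y₂*y₃+y₃*y₂+y₂*y₄+y₄*y₂
            +y₂*y₅+y₅*y₂+y₃*y₄+y₄*y₃+y₃*y₅+y₅*y₃+y₄*y₅+y₅*y₄))))
      - (((exp y₁ - 1 - y₁) - (2:ℝ)⁻¹ • (y₁*y₁)) + ((exp y₂ - 1 - y₂) - (2:ℝ)⁻¹ • (y₂*y₂))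
        + ((exp y₃ - 1 - y₃) - (2:ℝ)⁻¹ • (y₃*y₃)) + ((exp y₄ - 1 - y₄) - (2:ℝ)⁻¹ • (y₄*y₄))
        + ((exp y₅ - 1 - y₅) - (2:ℝ)⁻¹ • (y₅*y₅)))
      - (2:ℝ)⁻¹ • ((exp y₁ * exp y₂ * exp y₃ * exp y₄ * exp y₅ -
          (1 + (y₁ + y₂ + y₃ + y₄ + y₅) +
            (((exp y₁ - 1 - y₁) + (exp y₂ - 1 - y₂) + (exp y₃ - 1 - y₃)
                + (exp y₄ - 1 - y₄) + (exp y₅ - 1 - y₅)) +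
             (y₁*y₂ + y₁*y₃ + y₁*y₄ + y₁*y₅ + y₂*y₃ + y₂*y₄ + y₂*y₅ + y₃*y₄ + y₃*y₅ + y₄*y₅))))
        + (exp y₅ * exp y₄ * exp y₃ * exp y₂ * exp y₁ -
          (1 + (y₅ + y₄ + y₃ + y₂ + y₁) +
            (((exp y₅ - 1 - y₅) + (exp y₄ - 1 - y₄) + (exp y₃ - 1 - y₃)
                + (exp y₂ - 1 - y₂) + (exp y₁ - 1 - y₁)) +
             (y₅*y₄ + y₅*y₃ + y₅*y₂ + y₅*y₁ + y₄*y₃ + y₄*y₂ + y₄*y₁ + y₃*y₂ + y₃*y₁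
                + y₂*y₁))))) := by
    module
  rw [key]
  have step1 : ∀ X Y Z : 𝒜, ‖X - Y - Z‖ ≤ ‖X‖ + ‖Y‖ + ‖Z‖ := by
    intro X Y Z
    calc ‖X - Y - Z‖ ≤ ‖X - Y‖ + ‖Z‖ := norm_sub_le _ _
    _ ≤ ‖X‖ + ‖Y‖ + ‖Z‖ := by gcongr; exact norm_sub_le _ _
  refine (step1 _ _ _).trans ?_
  have hY : ‖(((exp y₁ - 1 - y₁) - (2:ℝ)⁻¹ • (y₁*y₁))
        + ((exp y₂ - 1 - y₂) - (2:ℝ)⁻¹ • (y₂*y₂))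
        + ((exp y₃ - 1 - y₃) - (2:ℝ)⁻¹ • (y₃*y₃))
        + ((exp y₄ - 1 - y₄) - (2:ℝ)⁻¹ • (y₄*y₄))
        + ((exp y₅ - 1 - y₅) - (2:ℝ)⁻¹ • (y₅*y₅)))‖ ≤
      (Real.exp ‖y₁‖ - 1 - ‖y₁‖ - ‖y₁‖^2/2) + (Real.exp ‖y₂‖ - 1 - ‖y₂‖ - ‖y₂‖^2/2)
        + (Real.exp ‖y₃‖ - 1 - ‖y₃‖ - ‖y₃‖^2/2) + (Real.exp ‖y₄‖ - 1 - ‖y₄‖ - ‖y₄‖^2/2)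
        + (Real.exp ‖y₅‖ - 1 - ‖y₅‖ - ‖y₅‖^2/2) :=
    (norm_add_le₅' _ _ _ _ _).trans (by gcongr <;> exact hr _)
  have hZ : ‖(2:ℝ)⁻¹ • ((exp y₁ * exp y₂ * exp y₃ * exp y₄ * exp y₅ -
          (1 + (y₁ + y₂ + y₃ + y₄ + y₅) +
            (((exp y₁ - 1 - y₁) + (exp y₂ - 1 - y₂) + (exp y₃ - 1 - y₃)
                + (exp y₄ - 1 - y₄) + (exp y₅ - 1 - y₅)) +
             (y₁*y₂ + y₁*y₃ + y₁*y₄ + y₁*y₅ + y₂*y₃ + y₂*y₄ + y₂*y₅ + y₃*y₄ + y₃*y₅ + y₄*y₅))))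
        + (exp y₅ * exp y₄ * exp y₃ * exp y₂ * exp y₁ -
          (1 + (y₅ + y₄ + y₃ + y₂ + y₁) +
            (((exp y₅ - 1 - y₅) + (exp y₄ - 1 - y₄) + (exp y₃ - 1 - y₃)
                + (exp y₂ - 1 - y₂) + (exp y₁ - 1 - y₁)) +
             (y₅*y₄ + y₅*y₃ + y₅*y₂ + y₅*y₁ + y₄*y₃ + y₄*y₂ + y₄*y₁ + y₃*y₂ + y₃*y₁
                + y₂*y₁)))))‖ ≤
      (2:ℝ)⁻¹ * ((Real.exp (‖y₁‖ + ‖y₂‖ + ‖y₃‖ + ‖y₄‖ + ‖y₅‖) + 4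
        - (Real.exp ‖y₁‖ + Real.exp ‖y₂‖ + Real.exp ‖y₃‖ + Real.exp ‖y₄‖ + Real.exp ‖y₅‖)
        - (‖y₁‖*‖y₂‖ + ‖y₁‖*‖y₃‖ + ‖y₁‖*‖y₄‖ + ‖y₁‖*‖y₅‖ + ‖y₂‖*‖y₃‖ + ‖y₂‖*‖y₄‖
            + ‖y₂‖*‖y₅‖ + ‖y₃‖*‖y₄‖ + ‖y₃‖*‖y₅‖ + ‖y₄‖*‖y₅‖))
        + (Real.exp (‖y₁‖ + ‖y₂‖ + ‖y₃‖ + ‖y₄‖ + ‖y₅‖) + 4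
        - (Real.exp ‖y₅‖ + Real.exp ‖y₄‖ + Real.exp ‖y₃‖ + Real.exp ‖y₂‖ + Real.exp ‖y₁‖)
        - (‖y₅‖*‖y₄‖ + ‖y₅‖*‖y₃‖ + ‖y₅‖*‖y₂‖ + ‖y₅‖*‖y₁‖ + ‖y₄‖*‖y₃‖ + ‖y₄‖*‖y₂‖
            + ‖y₄‖*‖y₁‖ + ‖y₃‖*‖y₂‖ + ‖y₃‖*‖y₁‖ + ‖y₂‖*‖y₁‖))) := by
    rw [norm_smul, Real.norm_eq_abs, abs_of_nonneg (by norm_num : (0:ℝ) ≤ (2:ℝ)⁻¹)]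
    gcongr
    exact (norm_add_le _ _).trans (by gcongr)
  have hX := hR.trans (rho_mono (norm_nonneg _) hsnorm)
  refine (add_le_add (add_le_add hX hY) hZ).trans ?_
  nlinarith [Real.exp_pos (‖y₁‖ + ‖y₂‖ + ‖y₃‖ + ‖y₄‖ + ‖y₅‖)]

end TrotterAux

theorem nested_triple_trotter_error {𝒜 : Type*} [NormedRing 𝒜] [NormedAlgebra ℝ 𝒜]
    [CompleteSpace 𝒜] (A₁ A₂ A₃ A₄ A₅ : 𝒜) (n : ℕ) (hn : 1 ≤ n) :
    ‖NormedSpace.exp (A₁ + A₂ + A₃ + A₄ + A₅) -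
        (jordanTriple (NormedSpace.exp ((n : ℝ)⁻¹ • A₄))
          (jordanTriple (NormedSpace.exp ((n : ℝ)⁻¹ • A₂)) (NormedSpace.exp ((n : ℝ)⁻¹ • A₁))
            (NormedSpace.exp ((n : ℝ)⁻¹ • A₃)))
          (NormedSpace.exp ((n : ℝ)⁻¹ • A₅))) ^ n‖ ≤
      1 / (3 * (n : ℝ) ^ 2) * (‖A₁‖ + ‖A₂‖ + ‖A₃‖ + ‖A₄‖ + ‖A₅‖) ^ 3 *
        Real.exp (‖A₁‖ + ‖A₂‖ + ‖A₃‖ + ‖A₄‖ + ‖A₅‖) := by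
  have hne : ((n:ℕ):ℝ) ≠ 0 := Nat.cast_ne_zero.mpr (by omega)
  set t : ℝ := (n:ℝ)⁻¹ with ht
  have ht0 : 0 ≤ t := by rw [ht]; positivity
  have hb₁ : ‖t • A₁‖ = t * ‖A₁‖ := by rw [norm_smul, Real.norm_eq_abs, abs_of_nonneg ht0]
  have hb₂ : ‖t • A₂‖ = t * ‖A₂‖ := by rw [norm_smul, Real.norm_eq_abs, abs_of_nonneg ht0]
  have hb₃ : ‖t • A₃‖ = t * ‖A₃‖ := by rw [norm_smul, Real.norm_eq_abs, abs_of_nonneg ht0]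
  have hb₄ : ‖t • A₄‖ = t * ‖A₄‖ := by rw [norm_smul, Real.norm_eq_abs, abs_of_nonneg ht0]
  have hb₅ : ‖t • A₅‖ = t * ‖A₅‖ := by rw [norm_smul, Real.norm_eq_abs, abs_of_nonneg ht0]
  set N : ℝ := ‖A₁‖ + ‖A₂‖ + ‖A₃‖ + ‖A₄‖ + ‖A₅‖ with hN
  set S : 𝒜 := A₁ + A₂ + A₃ + A₄ + A₅ with hS
  have hexpS : NormedSpace.exp S = (NormedSpace.exp (t • S))^n := by
    letI : NormedAlgebra ℚ 𝒜 := NormedAlgebra.restrictScalars ℚ ℝ 𝒜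
    rw [← exp_nsmul]
    congr 1
    rw [← Nat.cast_smul_eq_nsmul ℝ, smul_smul, ht, mul_inv_cancel₀ hne, one_smul]
  -- the two symmetrized pair bounds
  have hd₁ := pair_bound (t • A₄) (t • A₂) (t • A₁) (t • A₃) (t • A₅)
  rw [show t•A₄ + t•A₂ + t•A₁ + t•A₃ + t•A₅ = t • S from by rw [hS]; module] at hd₁
  rw [hb₁, hb₂, hb₃, hb₄, hb₅] at hd₁
  rw [show t*‖A₄‖ + t*‖A₂‖ + t*‖A₁‖ + t*‖A₃‖ + t*‖A₅‖ = t * N from by rw [hN]; ring] at hd₁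
  have hd₂ := pair_bound (t • A₄) (t • A₃) (t • A₁) (t • A₂) (t • A₅)
  rw [show t•A₄ + t•A₃ + t•A₁ + t•A₂ + t•A₅ = t • S from by rw [hS]; module] at hd₂
  rw [hb₁, hb₂, hb₃, hb₄, hb₅] at hd₂
  rw [show t*‖A₄‖ + t*‖A₃‖ + t*‖A₁‖ + t*‖A₂‖ + t*‖A₅‖ = t * N from by rw [hN]; ring] at hd₂
  set T : 𝒜 := jordanTriple (NormedSpace.exp (t • A₄))
      (jordanTriple (NormedSpace.exp (t • A₂)) (NormedSpace.exp (t • A₁))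
        (NormedSpace.exp (t • A₃))) (NormedSpace.exp (t • A₅)) with hT
  have hsplit : NormedSpace.exp (t • S) - T =
      (2:ℝ)⁻¹ • (NormedSpace.exp (t • S) - (2:ℝ)⁻¹ •
        (NormedSpace.exp (t•A₄) * NormedSpace.exp (t•A₂) * NormedSpace.exp (t•A₁)
            * NormedSpace.exp (t•A₃) * NormedSpace.exp (t•A₅)
          + NormedSpace.exp (t•A₅) * NormedSpace.exp (t•A₃) * NormedSpace.exp (t•A₁)
            * NormedSpace.exp (t•A₂) * NormedSpace.exp (t•A₄)))
      + (2:ℝ)⁻¹ • (NormedSpace.exp (t • S) - (2:ℝ)⁻¹ •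
        (NormedSpace.exp (t•A₄) * NormedSpace.exp (t•A₃) * NormedSpace.exp (t•A₁)
            * NormedSpace.exp (t•A₂) * NormedSpace.exp (t•A₅)
          + NormedSpace.exp (t•A₅) * NormedSpace.exp (t•A₂) * NormedSpace.exp (t•A₁)
            * NormedSpace.exp (t•A₃) * NormedSpace.exp (t•A₄))) := by
    rw [hT]
    simp only [jordanTriple, mul_add, add_mul, smul_add, mul_smul_comm, smul_mul_assoc,
      smul_smul, ← mul_assoc]
    module
  have hhalf : |(2:ℝ)⁻¹| = (2:ℝ)⁻¹ := abs_of_nonneg (by norm_num)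
  have hd : ‖NormedSpace.exp (t • S) - T‖ ≤
      2 * (Real.exp (t*N) - 1 - t*N - (t*N)^2/2) := by
    rw [hsplit]
    refine (norm_add_le _ _).trans ?_
    rw [norm_smul, norm_smul, Real.norm_eq_abs, hhalf]
    linarith [hd₁, hd₂]
  -- bounds on distances to 1
  have he₁ : ‖NormedSpace.exp (t•A₁) - 1‖ ≤ Real.exp (t*‖A₁‖) - 1 := by
    have h := exp_rem1 (t•A₁); rwa [hb₁] at h
  have he₂ : ‖NormedSpace.exp (t•A₂) - 1‖ ≤ Real.exp (t*‖A₂‖) - 1 := by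
    have h := exp_rem1 (t•A₂); rwa [hb₂] at h
  have he₃ : ‖NormedSpace.exp (t•A₃) - 1‖ ≤ Real.exp (t*‖A₃‖) - 1 := by
    have h := exp_rem1 (t•A₃); rwa [hb₃] at h
  have he₄ : ‖NormedSpace.exp (t•A₄) - 1‖ ≤ Real.exp (t*‖A₄‖) - 1 := by
    have h := exp_rem1 (t•A₄); rwa [hb₄] at h
  have he₅ : ‖NormedSpace.exp (t•A₅) - 1‖ ≤ Real.exp (t*‖A₅‖) - 1 := by
    have h := exp_rem1 (t•A₅); rwa [hb₅] at h
  have hP1 := mul_sub_one_exp (by rw [ht]; positivity) (by rw [ht]; positivity)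
    (mul_sub_one_exp (by rw [ht]; positivity) (by rw [ht]; positivity)
      (mul_sub_one_exp (by rw [ht]; positivity) (by rw [ht]; positivity)
        (mul_sub_one_exp (by rw [ht]; positivity) (by rw [ht]; positivity) he₄ he₂) he₁) he₃) he₅
  have hP1r := mul_sub_one_exp (by rw [ht]; positivity) (by rw [ht]; positivity)
    (mul_sub_one_exp (by rw [ht]; positivity) (by rw [ht]; positivity)
      (mul_sub_one_exp (by rw [ht]; positivity) (by rw [ht]; positivity)
        (mul_sub_one_exp (by rw [ht]; positivity) (by rw [ht]; positivity) he₅ he₃) he₁) he₂) he₄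
  have hP2 := mul_sub_one_exp (by rw [ht]; positivity) (by rw [ht]; positivity)
    (mul_sub_one_exp (by rw [ht]; positivity) (by rw [ht]; positivity)
      (mul_sub_one_exp (by rw [ht]; positivity) (by rw [ht]; positivity)
        (mul_sub_one_exp (by rw [ht]; positivity) (by rw [ht]; positivity) he₄ he₃) he₁) he₂) he₅
  have hP2r := mul_sub_one_exp (by rw [ht]; positivity) (by rw [ht]; positivity)
    (mul_sub_one_exp (by rw [ht]; positivity) (by rw [ht]; positivity)
      (mul_sub_one_exp (by rw [ht]; positivity) (by rw [ht]; positivity)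
        (mul_sub_one_exp (by rw [ht]; positivity) (by rw [ht]; positivity) he₅ he₂) he₁) he₃) he₄
  rw [show t*‖A₄‖ + t*‖A₂‖ + t*‖A₁‖ + t*‖A₃‖ + t*‖A₅‖ = t * N from by rw [hN]; ring] at hP1
  rw [show t*‖A₅‖ + t*‖A₃‖ + t*‖A₁‖ + t*‖A₂‖ + t*‖A₄‖ = t * N from by rw [hN]; ring] at hP1r
  rw [show t*‖A₄‖ + t*‖A₃‖ + t*‖A₁‖ + t*‖A₂‖ + t*‖A₅‖ = t * N from by rw [hN]; ring] at hP2
  rw [show t*‖A₅‖ + t*‖A₂‖ + t*‖A₁‖ + t*‖A₃‖ + t*‖A₄‖ = t * N from by rw [hN]; ring] at hP2r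
  have hTid : T - 1 =
      (2:ℝ)⁻¹ • ((2:ℝ)⁻¹ •
        ((NormedSpace.exp (t•A₄) * NormedSpace.exp (t•A₂) * NormedSpace.exp (t•A₁)
            * NormedSpace.exp (t•A₃) * NormedSpace.exp (t•A₅) - 1)
         + (NormedSpace.exp (t•A₅) * NormedSpace.exp (t•A₃) * NormedSpace.exp (t•A₁)
            * NormedSpace.exp (t•A₂) * NormedSpace.exp (t•A₄) - 1))
      + (2:ℝ)⁻¹ •
        ((NormedSpace.exp (t•A₄) * NormedSpace.exp (t•A₃) * NormedSpace.exp (t•A₁)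
            * NormedSpace.exp (t•A₂) * NormedSpace.exp (t•A₅) - 1)
         + (NormedSpace.exp (t•A₅) * NormedSpace.exp (t•A₂) * NormedSpace.exp (t•A₁)
            * NormedSpace.exp (t•A₃) * NormedSpace.exp (t•A₄) - 1))) := by
    rw [hT]
    simp only [jordanTriple, mul_add, add_mul, smul_add, mul_smul_comm, smul_mul_assoc,
      smul_smul, ← mul_assoc]
    module
  have hT1 : ‖T - 1‖ ≤ Real.exp (t*N) - 1 := by
    rw [hTid, norm_smul, Real.norm_eq_abs, hhalf]
    have i1 : ‖(2:ℝ)⁻¹ •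
        ((NormedSpace.exp (t•A₄) * NormedSpace.exp (t•A₂) * NormedSpace.exp (t•A₁)
            * NormedSpace.exp (t•A₃) * NormedSpace.exp (t•A₅) - 1)
         + (NormedSpace.exp (t•A₅) * NormedSpace.exp (t•A₃) * NormedSpace.exp (t•A₁)
            * NormedSpace.exp (t•A₂) * NormedSpace.exp (t•A₄) - 1))‖ ≤
        Real.exp (t*N) - 1 := by
      rw [norm_smul, Real.norm_eq_abs, hhalf]
      have := (norm_add_le _ _).trans (add_le_add hP1 hP1r)
      linarith
    have i2 : ‖(2:ℝ)⁻¹ •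
        ((NormedSpace.exp (t•A₄) * NormedSpace.exp (t•A₃) * NormedSpace.exp (t•A₁)
            * NormedSpace.exp (t•A₂) * NormedSpace.exp (t•A₅) - 1)
         + (NormedSpace.exp (t•A₅) * NormedSpace.exp (t•A₂) * NormedSpace.exp (t•A₁)
            * NormedSpace.exp (t•A₃) * NormedSpace.exp (t•A₄) - 1))‖ ≤
        Real.exp (t*N) - 1 := by
      rw [norm_smul, Real.norm_eq_abs, hhalf]
      have := (norm_add_le _ _).trans (add_le_add hP2 hP2r)
      linarith
    have := (norm_add_le _ _).trans (add_le_add i1 i2)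
    linarith
  have hE1 : ‖NormedSpace.exp (t • S) - 1‖ ≤ Real.exp (t*N) - 1 := by
    have h := exp_rem1 (t • S)
    have hsn : ‖t • S‖ ≤ t * N := by
      rw [norm_smul, Real.norm_eq_abs, abs_of_nonneg ht0, hS, hN]
      have := norm_add_le₅' A₁ A₂ A₃ A₄ A₅
      exact mul_le_mul_of_nonneg_left this ht0
    have := Real.exp_le_exp.mpr hsn
    linarith
  obtain ⟨k, rfl⟩ : ∃ k, n = k + 1 := ⟨n - 1, by omega⟩
  rw [hexpS]
  have htel := pow_sub_pow_le hE1 hT1 hd k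
  refine htel.trans ?_
  have hτ0 : 0 ≤ t*N := by rw [ht, hN]; positivity
  rw [show (1:ℝ) + (Real.exp (t*N) - 1) = Real.exp (t*N) from by ring]
  have h2ρ : 2*(Real.exp (t*N) - 1 - t*N - (t*N)^2/2) ≤ (t*N)^3/3*Real.exp (t*N) := by
    have := rho_cube hτ0
    linarith
  calc ((k:ℝ)+1) * (Real.exp (t*N))^k * (2*(Real.exp (t*N) - 1 - t*N - (t*N)^2/2))
      ≤ ((k:ℝ)+1) * (Real.exp (t*N))^k * ((t*N)^3/3*Real.exp (t*N)) := by
        have hkp : (0:ℝ) ≤ ((k:ℝ)+1) * (Real.exp (t*N))^k := by positivity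
        exact mul_le_mul_of_nonneg_left h2ρ hkp
    _ = (((k:ℝ)+1) * ((t*N)^3/3)) * ((Real.exp (t*N))^k * Real.exp (t*N)) := by ring
    _ = (((k:ℝ)+1) * ((t*N)^3/3)) * Real.exp N := by
        rw [← Real.exp_nat_mul, ← Real.exp_add]
        congr 1
        rw [ht]
        push_cast
        field_simp
    _ = 1 / (3 * ((k+1:ℕ):ℝ) ^ 2) * N ^ 3 * Real.exp N := by
        rw [ht]
        push_cast
        rw [show (((k:ℝ)+1))⁻¹ * N = N / ((k:ℝ)+1) from by ring]
        field_simp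
end
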